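/- arXiv:2401.06736 — 2 statements merged into one kernel-verified Lean document; each statement's English description precedes it below -/
import Mathlib

section
/- For every (z,σ) ∈ ℝ^N ∖ {(0,0)} one has 𝓛_{α,2}(ρ)(z,σ) = ((Q−1)/ρ(z,σ)) · (Φ⁰(z)/ρ(z,σ))^{2α}, where Q = m + (α+1)k. -/
open Real MeasureTheory
open scoped RealInnerProductSpace

set_option maxHeartbeats 1000000

noncomputable section

abbrev Euc (n : ℕ) := EuclideanSpace ℝ (Fin n)

/-- A Minkowski norm on `ℝⁿ`: nonnegative, absolutely homogeneous, with `N²` of class `C²`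
away from the origin and strictly convex. -/
def IsMinkowskiNorm {n : ℕ} (N : Euc n → ℝ) : Prop :=
  (∀ x, 0 ≤ N x) ∧ (∀ (l : ℝ) (x : Euc n), N (l • x) = |l| * N x) ∧
  ContDiffOn ℝ 2 (fun x => (N x) ^ 2) {(0 : Euc n)}ᶜ ∧
  StrictConvexOn ℝ Set.univ (fun x => (N x) ^ 2)

/-- The Legendre transform (dual norm) `N⁰(x) = sup { ⟨x,ξ⟩ : N(ξ) = 1 }`. -/
def dualNorm {n : ℕ} (N : Euc n → ℝ) (x : Euc n) : ℝ :=
  sSup ((fun ξ => ⟪x, ξ⟫) '' {ξ | N ξ = 1})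

section Basic
variable {n : ℕ} {N : Euc n → ℝ}

lemma mk_zero (hN : IsMinkowskiNorm N) : N 0 = 0 := by
  simpa using hN.2.1 0 0

lemma mk_pos (hN : IsMinkowskiNorm N) {x : Euc n} (hx : x ≠ 0) : 0 < N x := by
  have hxy : x ≠ -x := by
    intro h
    apply hx
    have h2 : (2 : ℝ) • x = 0 := by
      rw [two_smul]; nth_rw 2 [h]; simp
    simpa using (smul_eq_zero.mp h2).resolve_left (by norm_num)
  have h := hN.2.2.2.2 (Set.mem_univ x) (Set.mem_univ (-x)) hxy
    (by norm_num : (0:ℝ) < 1/2) (by norm_num : (0:ℝ) < 1/2) (by norm_num)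
  have hmid : (1/2 : ℝ) • x + (1/2 : ℝ) • (-x) = 0 := by
    rw [smul_neg]; abel
  have hneg : N (-x) = N x := by
    have := hN.2.1 (-1) x
    simpa using this
  have h' : N 0 ^ 2 < (1/2) * (N x ^ 2) + (1/2) * (N (-x) ^ 2) := by
    simpa [hmid] using h
  rw [mk_zero hN, hneg] at h'
  nlinarith [hN.1 x]

lemma mk_homog (hN : IsMinkowskiNorm N) (l : ℝ) (x : Euc n) : N (l • x) = |l| * N x :=
  hN.2.1 l x

lemma mk_contOn (hN : IsMinkowskiNorm N) : ContinuousOn N {(0 : Euc n)}ᶜ := by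
  have h : ContinuousOn (fun x => Real.sqrt ((N x)^2)) {(0:Euc n)}ᶜ :=
    (hN.2.2.1.continuousOn).sqrt
  have : (fun x => Real.sqrt ((N x)^2)) = N := funext fun x => Real.sqrt_sq (hN.1 x)
  rwa [this] at h

lemma mk_bounds (hN : IsMinkowskiNorm N) (hn : 0 < n) :
    ∃ c C : ℝ, 0 < c ∧ 0 < C ∧ ∀ x, c * ‖x‖ ≤ N x ∧ N x ≤ C * ‖x‖ := by
  have hne : (Metric.sphere (0 : Euc n) 1).Nonempty := by
    have : Nontrivial (Euc n) := ⟨⟨0, EuclideanSpace.single ⟨0, hn⟩ 1, by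
      intro h
      have h0 := congrArg (fun v : Euc n => v ⟨0, hn⟩) h
      simp [EuclideanSpace.single_apply] at h0⟩⟩
    exact NormedSpace.sphere_nonempty.mpr zero_le_one
  have hsub : Metric.sphere (0 : Euc n) 1 ⊆ {(0:Euc n)}ᶜ := fun x hx => by
    simp only [Metric.mem_sphere, dist_zero_right] at hx
    simp only [Set.mem_compl_iff, Set.mem_singleton_iff]
    intro h; rw [h] at hx; simp at hx
  have hcont : ContinuousOn N (Metric.sphere (0:Euc n) 1) := (mk_contOn hN).mono hsub
  obtain ⟨ξM, hξM, hmax⟩ := (isCompact_sphere (0:Euc n) 1).exists_isMaxOn hne hcont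
  obtain ⟨ξm, hξm, hmin⟩ := (isCompact_sphere (0:Euc n) 1).exists_isMinOn hne hcont
  have hpos : 0 < N ξm := mk_pos hN (by
    intro h; exact (hsub hξm) (by simp [h]))
  refine ⟨N ξm, N ξM, hpos, lt_of_lt_of_le hpos (hmin hξM), fun x => ?_⟩
  rcases eq_or_ne x 0 with rfl | hx
  · simp [mk_zero hN]
  · have hxn : ‖x‖ ≠ 0 := norm_ne_zero_iff.mpr hx
    set u := ‖x‖⁻¹ • x with hu
    have hun : u ∈ Metric.sphere (0:Euc n) 1 := by
      simp [hu, norm_smul, abs_of_nonneg (inv_nonneg.mpr (norm_nonneg x)),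
        inv_mul_cancel₀ hxn]
    have hxu : x = ‖x‖ • u := by
      rw [hu, smul_smul, mul_inv_cancel₀ hxn, one_smul]
    have hNx : N x = ‖x‖ * N u := by
      rw [hxu, mk_homog hN, abs_of_nonneg (norm_nonneg x)]
      rw [← hxu]
    constructor
    · rw [hNx]; rw [mul_comm (N ξm)]
      exact mul_le_mul_of_nonneg_left (hmin hun) (norm_nonneg x)
    · rw [hNx, mul_comm (N ξM)]
      exact mul_le_mul_of_nonneg_left (hmax hun) (norm_nonneg x)

end Basic

section Dual
variable {n : ℕ} {N : Euc n → ℝ}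

/-- scaling with a nonnegative factor -/
lemma mk_homog' (hN : IsMinkowskiNorm N) {l : ℝ} (hl : 0 ≤ l) (x : Euc n) :
    N (l • x) = l * N x := by rw [mk_homog hN, abs_of_nonneg hl]

lemma mk_cont (hN : IsMinkowskiNorm N) (hn : 0 < n) : Continuous N := by
  obtain ⟨c, C, hc, hC, hb⟩ := mk_bounds hN hn
  rw [continuous_iff_continuousAt]
  intro x
  rcases eq_or_ne x 0 with rfl | hx
  · rw [ContinuousAt, mk_zero hN]
    apply squeeze_zero (fun t => hN.1 t) (fun t => (hb t).2)
    have : Continuous (fun t : Euc n => C * ‖t‖) := continuous_const.mul continuous_norm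
    have h0 := this.tendsto (0 : Euc n)
    simpa using h0
  · exact (mk_contOn hN).continuousAt (isOpen_compl_singleton.mem_nhds hx)

lemma unitSet_compact (hN : IsMinkowskiNorm N) (hn : 0 < n) :
    IsCompact {ξ : Euc n | N ξ = 1} ∧ {ξ : Euc n | N ξ = 1}.Nonempty := by
  obtain ⟨c, C, hc, hC, hb⟩ := mk_bounds hN hn
  constructor
  · have hclosed : IsClosed {ξ : Euc n | N ξ = 1} :=
      isClosed_singleton.preimage (mk_cont hN hn)
    have hbdd : Bornology.IsBounded {ξ : Euc n | N ξ = 1} := by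
      apply (Metric.isBounded_closedBall (x := (0:Euc n)) (r := 1/c)).subset
      intro ξ hξ
      simp only [Set.mem_setOf_eq] at hξ
      simp only [Metric.mem_closedBall, dist_zero_right]
      have := (hb ξ).1
      rw [hξ] at this
      rw [le_div_iff₀ hc, mul_comm]
      exact this
    exact Metric.isCompact_of_isClosed_isBounded hclosed hbdd
  · obtain ⟨x, hx⟩ : ∃ x : Euc n, x ≠ 0 := by
      refine ⟨EuclideanSpace.single ⟨0, hn⟩ 1, fun h => ?_⟩
      have h0 := congrArg (fun v : Euc n => v ⟨0, hn⟩) h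
      simp [EuclideanSpace.single_apply] at h0
    refine ⟨(N x)⁻¹ • x, ?_⟩
    have hpos := mk_pos hN hx
    simp only [Set.mem_setOf_eq]
    rw [mk_homog' hN (le_of_lt (inv_pos.mpr hpos))]
    field_simp

def IsDualMax {n : ℕ} (N : Euc n → ℝ) (z ξ : Euc n) : Prop :=
  N ξ = 1 ∧ dualNorm N z = ⟪z, ξ⟫

lemma exists_isDualMax (hN : IsMinkowskiNorm N) (hn : 0 < n) (z : Euc n) :
    ∃ ξ, IsDualMax N z ξ ∧ ∀ w, N w = 1 → ⟪z, w⟫ ≤ ⟪z, ξ⟫ := by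
  obtain ⟨hK, hKne⟩ := unitSet_compact hN hn
  have hcont : Continuous (fun ξ : Euc n => ⟪z, ξ⟫) := continuous_const.inner continuous_id
  obtain ⟨ξ, hξK, hmax⟩ := hK.exists_isMaxOn hKne hcont.continuousOn
  refine ⟨ξ, ⟨hξK, ?_⟩, fun w hw => hmax hw⟩
  apply IsGreatest.csSup_eq
  constructor
  · exact ⟨ξ, hξK, rfl⟩
  · rintro y ⟨w, hw, rfl⟩
    exact hmax hw

lemma isDualMax_inner_le (hN : IsMinkowskiNorm N) (hn : 0 < n) {z ξ : Euc n}
    (h : IsDualMax N z ξ) : ∀ w, N w = 1 → ⟪z, w⟫ ≤ ⟪z, ξ⟫ := by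
  obtain ⟨ξ', hξ', hmax⟩ := exists_isDualMax hN hn z
  intro w hw
  have h1 : ⟪z, w⟫ ≤ ⟪z, ξ'⟫ := hmax w hw
  have h2 : ⟪z, ξ'⟫ = ⟪z, ξ⟫ := by rw [← hξ'.2, h.2]
  linarith

lemma isDualMax_nonneg (hN : IsMinkowskiNorm N) (hn : 0 < n) {z ξ : Euc n}
    (h : IsDualMax N z ξ) : 0 ≤ ⟪z, ξ⟫ := by
  have hneg : N (-ξ) = 1 := by
    have := mk_homog hN (-1) ξ
    simp only [neg_smul, one_smul, abs_neg, abs_one, one_mul] at this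
    rw [this, h.1]
  have := isDualMax_inner_le hN hn h (-ξ) hneg
  simp only [inner_neg_right] at this
  linarith

lemma dualNorm_nonneg (hN : IsMinkowskiNorm N) (hn : 0 < n) (z : Euc n) :
    0 ≤ dualNorm N z := by
  obtain ⟨ξ, hξ, _⟩ := exists_isDualMax hN hn z
  rw [hξ.2]; exact isDualMax_nonneg hN hn hξ

lemma dualNorm_pos (hN : IsMinkowskiNorm N) (hn : 0 < n) {z : Euc n} (hz : z ≠ 0) :
    0 < dualNorm N z := by
  obtain ⟨ξ, hξ, _⟩ := exists_isDualMax hN hn z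
  have hpos := mk_pos hN hz
  have h1 : N ((N z)⁻¹ • z) = 1 := by
    rw [mk_homog' hN (le_of_lt (inv_pos.mpr hpos))]; field_simp
  have h2 : ⟪z, (N z)⁻¹ • z⟫ ≤ ⟪z, ξ⟫ := isDualMax_inner_le hN hn hξ _ h1
  have h3 : ⟪z, (N z)⁻¹ • z⟫ = (N z)⁻¹ * ‖z‖^2 := by
    rw [real_inner_smul_right, real_inner_self_eq_norm_sq]
  rw [hξ.2]
  refine lt_of_lt_of_le ?_ h2
  rw [h3]
  have : 0 < ‖z‖ := norm_pos_iff.mpr hz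
  positivity

lemma inner_le_dualNorm (hN : IsMinkowskiNorm N) (hn : 0 < n) (z w : Euc n) :
    ⟪z, w⟫ ≤ dualNorm N z * N w := by
  rcases eq_or_ne w 0 with rfl | hw
  · simp [mk_zero hN]
  · have hpos := mk_pos hN hw
    have h1 : N ((N w)⁻¹ • w) = 1 := by
      rw [mk_homog' hN (le_of_lt (inv_pos.mpr hpos))]; field_simp
    obtain ⟨ξ, hξ, _⟩ := exists_isDualMax hN hn z
    have h2 : ⟪z, (N w)⁻¹ • w⟫ ≤ ⟪z, ξ⟫ := isDualMax_inner_le hN hn hξ _ h1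
    rw [real_inner_smul_right] at h2
    rw [← hξ.2] at h2
    calc ⟪z, w⟫ = N w * ((N w)⁻¹ * ⟪z, w⟫) := by field_simp
    _ ≤ N w * dualNorm N z := mul_le_mul_of_nonneg_left h2 (le_of_lt hpos)
    _ = dualNorm N z * N w := mul_comm _ _

lemma dualNorm_bound (hN : IsMinkowskiNorm N) (hn : 0 < n) :
    ∃ R : ℝ, 0 < R ∧ (∀ ξ, N ξ = 1 → ‖ξ‖ ≤ R) ∧ ∀ z, dualNorm N z ≤ R * ‖z‖ := by
  obtain ⟨c, C, hc, hC, hb⟩ := mk_bounds hN hn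
  refine ⟨1/c, by positivity, fun ξ hξ => ?_, fun z => ?_⟩
  · have := (hb ξ).1
    rw [hξ] at this
    rw [le_div_iff₀ hc, mul_comm]; exact this
  · obtain ⟨ξ, hξ, _⟩ := exists_isDualMax hN hn z
    rw [hξ.2]
    calc ⟪z, ξ⟫ ≤ ‖z‖ * ‖ξ‖ := real_inner_le_norm z ξ
    _ ≤ ‖z‖ * (1/c) := by
        apply mul_le_mul_of_nonneg_left _ (norm_nonneg z)
        have := (hb ξ).1
        rw [hξ.1] at this
        rw [le_div_iff₀ hc, mul_comm]; exact this
    _ = (1/c) * ‖z‖ := mul_comm _ _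

lemma dualNorm_zero (hN : IsMinkowskiNorm N) (hn : 0 < n) : dualNorm N (0 : Euc n) = 0 := by
  obtain ⟨R, hR, _, hle⟩ := dualNorm_bound hN hn
  have h1 := hle 0
  have h2 := dualNorm_nonneg hN hn (0 : Euc n)
  simp only [norm_zero, mul_zero] at h1
  linarith

lemma dualNorm_continuous (hN : IsMinkowskiNorm N) (hn : 0 < n) :
    Continuous (dualNorm N) := by
  obtain ⟨R, hR, hRξ, _⟩ := dualNorm_bound hN hn
  have key : ∀ z z' : Euc n, dualNorm N z' ≤ dualNorm N z + R * ‖z' - z‖ := by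
    intro z z'
    obtain ⟨ξ', hξ', _⟩ := exists_isDualMax hN hn z'
    rw [hξ'.2]
    have h1 : ⟪z', ξ'⟫ = ⟪z, ξ'⟫ + ⟪z' - z, ξ'⟫ := by
      rw [← inner_add_left]
      congr 1
      abel
    rw [h1]
    have h2 : ⟪z, ξ'⟫ ≤ dualNorm N z := by
      have := inner_le_dualNorm hN hn z ξ'
      rw [hξ'.1, mul_one] at this; exact this
    have h3 : ⟪z' - z, ξ'⟫ ≤ R * ‖z' - z‖ := by
      calc ⟪z' - z, ξ'⟫ ≤ ‖z' - z‖ * ‖ξ'‖ := real_inner_le_norm _ _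
      _ ≤ ‖z' - z‖ * R := mul_le_mul_of_nonneg_left (hRξ ξ' hξ'.1) (norm_nonneg _)
      _ = R * ‖z' - z‖ := mul_comm _ _
    linarith
  have : LipschitzWith (Real.toNNReal R) (dualNorm N) := by
    apply LipschitzWith.of_dist_le_mul
    intro z z'
    rw [Real.dist_eq, dist_eq_norm]
    rw [Real.coe_toNNReal R (le_of_lt hR)]
    rw [abs_le]
    constructor
    · have h1 := key z z'
      have hn2 : ‖z' - z‖ = ‖z - z'‖ := norm_sub_rev _ _
      rw [hn2] at h1
      linarith
    · have h1 := key z' z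
      linarith
  exact this.continuous

end Dual

section Dual2
variable {n : ℕ} {N : Euc n → ℝ}
lemma isDualMax_unique (hN : IsMinkowskiNorm N) (hn : 0 < n) {z ξ₁ ξ₂ : Euc n} (hz : z ≠ 0)
    (h1 : IsDualMax N z ξ₁) (h2 : IsDualMax N z ξ₂) : ξ₁ = ξ₂ := by
  by_contra hne
  have hconv := hN.2.2.2.2 (Set.mem_univ ξ₁) (Set.mem_univ ξ₂) hne
    (by norm_num : (0:ℝ) < 1/2) (by norm_num : (0:ℝ) < 1/2) (by norm_num)
  set mid := (1/2 : ℝ) • ξ₁ + (1/2 : ℝ) • ξ₂ with hmid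
  have hmidlt : N mid ^ 2 < 1 := by
    have e1 : N ξ₁ ^ 2 = 1 := by rw [h1.1]; norm_num
    have e2 : N ξ₂ ^ 2 = 1 := by rw [h2.1]; norm_num
    have hc2 := hconv
    simp only [smul_eq_mul] at hc2
    rw [e1, e2] at hc2
    linarith
  have hdpos := dualNorm_pos hN hn hz
  have hinner : ⟪z, mid⟫ = dualNorm N z := by
    rw [hmid, inner_add_right, real_inner_smul_right, real_inner_smul_right,
      ← h1.2, ← h2.2]
    ring
  have hmid0 : mid ≠ 0 := by
    intro h
    rw [h, inner_zero_right] at hinner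
    linarith
  have hNmid : 0 < N mid := mk_pos hN hmid0
  have hNmid1 : N mid < 1 := by nlinarith
  have hunit : N ((N mid)⁻¹ • mid) = 1 := by
    rw [mk_homog' hN (le_of_lt (inv_pos.mpr hNmid))]; field_simp
  have hle := isDualMax_inner_le hN hn h1 _ hunit
  rw [real_inner_smul_right, hinner, ← h1.2] at hle
  have : dualNorm N z < (N mid)⁻¹ * dualNorm N z := by
    have h1' : 1 < (N mid)⁻¹ := by
      rw [← one_div, lt_div_iff₀ hNmid]
      linarith
    nlinarith
  linarith

lemma isDualMax_stable (hN : IsMinkowskiNorm N) (hn : 0 < n) {z ξ : Euc n} (hz : z ≠ 0)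
    (hmax : IsDualMax N z ξ) :
    ∀ ε > 0, ∃ δ > 0, ∀ z' ξ', ‖z' - z‖ < δ → IsDualMax N z' ξ' → ‖ξ' - ξ‖ < ε := by
  intro ε hε
  obtain ⟨R, hR, hRξ, hRd⟩ := dualNorm_bound hN hn
  obtain ⟨hK, _⟩ := unitSet_compact hN hn
  set S := {w : Euc n | N w = 1} ∩ {w : Euc n | ε ≤ ‖w - ξ‖} with hS
  have hSclosed : IsClosed {w : Euc n | ε ≤ ‖w - ξ‖} := by
    have : Continuous fun w : Euc n => ‖w - ξ‖ := (continuous_id.sub continuous_const).norm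
    exact isClosed_le continuous_const this
  have hScompact : IsCompact S := hK.inter_right hSclosed
  rcases Set.eq_empty_or_nonempty S with hSe | hSne
  · refine ⟨1, one_pos, fun z' ξ' _ hξ' => ?_⟩
    by_contra hcon
    push_neg at hcon
    have : ξ' ∈ S := ⟨hξ'.1, hcon⟩
    rw [hSe] at this
    exact this
  · have hcont : Continuous (fun w : Euc n => ⟪z, w⟫) := continuous_const.inner continuous_id
    obtain ⟨w₀, hw₀S, hw₀max⟩ := hScompact.exists_isMaxOn hSne hcont.continuousOn
    set M := ⟪z, w₀⟫ with hM
    have hMlt : M < dualNorm N z := by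
      have hle : M ≤ dualNorm N z := by
        have := inner_le_dualNorm hN hn z w₀
        rw [hw₀S.1, mul_one] at this; exact this
      rcases lt_or_eq_of_le hle with h | h
      · exact h
      · exfalso
        have hw₀dm : IsDualMax N z w₀ := ⟨hw₀S.1, h.symm⟩
        have := isDualMax_unique hN hn hz hmax hw₀dm
        have hw2 := hw₀S.2
        rw [← this] at hw2
        simp only [Set.mem_setOf_eq, sub_self, norm_zero] at hw2
        linarith
    set D := dualNorm N z - M with hD
    have hDpos : 0 < D := by rw [hD]; linarith
    refine ⟨D / (2 * R + 2), by positivity, fun z' ξ' hz' hξ' => ?_⟩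
    by_contra hcon
    push_neg at hcon
    have hξ'S : ξ' ∈ S := ⟨hξ'.1, hcon⟩
    have hin1 : ⟪z, ξ'⟫ ≤ M := hw₀max hξ'S
    have habs1 : |⟪z' - z, ξ'⟫| ≤ ‖z' - z‖ * R := by
      calc |⟪z' - z, ξ'⟫| ≤ ‖z' - z‖ * ‖ξ'‖ := abs_real_inner_le_norm _ _
      _ ≤ ‖z' - z‖ * R := mul_le_mul_of_nonneg_left (hRξ ξ' hξ'.1) (norm_nonneg _)
    have habs2 : |⟪z' - z, ξ⟫| ≤ ‖z' - z‖ * R := by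
      calc |⟪z' - z, ξ⟫| ≤ ‖z' - z‖ * ‖ξ‖ := abs_real_inner_le_norm _ _
      _ ≤ ‖z' - z‖ * R := mul_le_mul_of_nonneg_left (hRξ ξ hmax.1) (norm_nonneg _)
    have hsub1 : ⟪z' - z, ξ'⟫ = ⟪z', ξ'⟫ - ⟪z, ξ'⟫ := inner_sub_left _ _ _
    have hsub2 : ⟪z' - z, ξ⟫ = ⟪z', ξ⟫ - ⟪z, ξ⟫ := inner_sub_left _ _ _
    have hup : dualNorm N z' ≤ M + ‖z' - z‖ * R := by
      rw [hξ'.2]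
      have := abs_le.mp habs1
      linarith
    have hlow : dualNorm N z - ‖z' - z‖ * R ≤ dualNorm N z' := by
      have h1 : ⟪z', ξ⟫ ≤ dualNorm N z' := by
        have := inner_le_dualNorm hN hn z' ξ
        rw [hmax.1, mul_one] at this; exact this
      have := abs_le.mp habs2
      rw [← hmax.2] at hsub2
      linarith
    have hRn : ‖z' - z‖ * R < D / (2 * R + 2) * R :=
      mul_lt_mul_of_pos_right hz' hR
    have hfrac : D / (2 * R + 2) * R * 2 < D := by
      rw [div_mul_eq_mul_div, div_mul_eq_mul_div, div_lt_iff₀ (by positivity)]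
      nlinarith
    linarith

lemma hasGradientAt_dualNorm (hN : IsMinkowskiNorm N) (hn : 0 < n) {z ξ : Euc n}
    (hz : z ≠ 0) (hmax : IsDualMax N z ξ) : HasGradientAt (dualNorm N) ξ z := by
  rw [hasGradientAt_iff_isLittleO, Asymptotics.isLittleO_iff]
  intro c hc
  obtain ⟨δ, hδ, hstab⟩ := isDualMax_stable hN hn hz hmax c hc
  rw [Filter.eventually_iff_exists_mem]
  refine ⟨Metric.ball z δ, Metric.ball_mem_nhds z hδ, fun z' hz' => ?_⟩
  rw [Metric.mem_ball, dist_eq_norm] at hz'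
  obtain ⟨ξ', hξ', _⟩ := exists_isDualMax hN hn z'
  have hclose : ‖ξ' - ξ‖ < c := hstab z' ξ' hz' hξ'
  have hcomm : ⟪ξ, z' - z⟫ = ⟪z' - z, ξ⟫ := real_inner_comm _ _
  have hsub1 : ⟪z' - z, ξ⟫ = ⟪z', ξ⟫ - ⟪z, ξ⟫ := inner_sub_left _ _ _
  have hsub2 : ⟪z' - z, ξ'⟫ = ⟪z', ξ'⟫ - ⟪z, ξ'⟫ := inner_sub_left _ _ _
  have hmz : ⟪z, ξ⟫ = dualNorm N z := hmax.2.symm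
  have hlow : 0 ≤ dualNorm N z' - dualNorm N z - ⟪ξ, z' - z⟫ := by
    have h1 : ⟪z', ξ⟫ ≤ dualNorm N z' := by
      have := inner_le_dualNorm hN hn z' ξ
      rw [hmax.1, mul_one] at this; exact this
    rw [hcomm, hsub1]
    linarith
  have hup : dualNorm N z' - dualNorm N z - ⟪ξ, z' - z⟫ ≤ c * ‖z' - z‖ := by
    have h1 : ⟪z, ξ'⟫ ≤ dualNorm N z := by
      have := inner_le_dualNorm hN hn z ξ'
      rw [hξ'.1, mul_one] at this; exact this
    have hsplit : ⟪z' - z, ξ'⟫ = ⟪z' - z, ξ⟫ + ⟪z' - z, ξ' - ξ⟫ := by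
      rw [inner_sub_right]; ring
    have hb : ⟪z' - z, ξ' - ξ⟫ ≤ ‖z' - z‖ * c := by
      calc ⟪z' - z, ξ' - ξ⟫ ≤ ‖z' - z‖ * ‖ξ' - ξ‖ := real_inner_le_norm _ _
      _ ≤ ‖z' - z‖ * c := mul_le_mul_of_nonneg_left (le_of_lt hclose) (norm_nonneg _)
    rw [hcomm, hsub1, hξ'.2]
    rw [hsub1, hsub2] at hsplit
    nlinarith [hsplit, hb, h1]
  rw [Real.norm_eq_abs, abs_le]
  constructor
  · have hpos : 0 ≤ c * ‖z' - z‖ := by positivity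
    linarith
  · exact hup

end Dual2

section Dual3
variable {n : ℕ} {N : Euc n → ℝ}
lemma mk_differentiableAt (hN : IsMinkowskiNorm N) {x : Euc n} (hx : x ≠ 0) :
    DifferentiableAt ℝ N x := by
  have h2 : ContDiffAt ℝ 2 (fun y => N y ^ 2) x :=
    hN.2.2.1.contDiffAt (isOpen_compl_singleton.mem_nhds hx)
  have hpos : (0:ℝ) < N x ^ 2 := pow_pos (mk_pos hN hx) 2
  have hs : ContDiffAt ℝ 2 (fun y => Real.sqrt (N y ^ 2)) x :=
    (contDiffAt_sqrt (ne_of_gt hpos)).comp x h2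
  have he : (fun y => Real.sqrt (N y ^ 2)) = N := funext fun y => Real.sqrt_sq (hN.1 y)
  rw [he] at hs
  exact hs.differentiableAt (by norm_num)

/-- At the dual maximizer, the gradient of `N` is `z / N⁰(z)`. -/
lemma gradient_N_at_dualMax (hN : IsMinkowskiNorm N) (hn : 0 < n) {z ξ : Euc n}
    (hz : z ≠ 0) (hmax : IsDualMax N z ξ) :
    gradient N ξ = (dualNorm N z)⁻¹ • z := by
  have hξ0 : ξ ≠ 0 := by
    intro h
    have := hmax.1
    rw [h, mk_zero hN] at this
    norm_num at this
  have hdiff := mk_differentiableAt hN hξ0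
  set L := fderiv ℝ N ξ with hL
  have hFd : HasFDerivAt (fun w : Euc n => dualNorm N z * N w - ⟪z, w⟫)
      (dualNorm N z • L - innerSL ℝ z) ξ := by
    have h1 : HasFDerivAt N L ξ := hdiff.hasFDerivAt
    have h2 : HasFDerivAt (fun w : Euc n => ⟪z, w⟫) (innerSL ℝ z) ξ :=
      (innerSL ℝ z).hasFDerivAt
    exact (h1.const_mul _).sub h2
  have hFmin : IsLocalMin (fun w : Euc n => dualNorm N z * N w - ⟪z, w⟫) ξ := by
    apply Filter.Eventually.of_forall
    intro w
    have h1 : ⟪z, w⟫ ≤ dualNorm N z * N w := inner_le_dualNorm hN hn z w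
    have h2 : dualNorm N z * N ξ - ⟪z, ξ⟫ = 0 := by
      rw [hmax.1, mul_one, ← hmax.2]; ring
    simp only []
    rw [h2]
    linarith
  have hzero : dualNorm N z • L - innerSL ℝ z = 0 := by
    rw [← hFd.fderiv]
    exact hFmin.fderiv_eq_zero
  have hLval : dualNorm N z • L = innerSL ℝ z := by
    rwa [sub_eq_zero] at hzero
  have hdn := dualNorm_pos hN hn hz
  have hgrad : HasGradientAt N ((dualNorm N z)⁻¹ • z) ξ := by
    have hfd2 : HasFDerivAt N ((dualNorm N z)⁻¹ • innerSL ℝ z) ξ := by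
      have : L = (dualNorm N z)⁻¹ • innerSL ℝ z := by
        rw [← hLval, smul_smul, inv_mul_cancel₀ (ne_of_gt hdn), one_smul]
      rw [← this]
      exact hdiff.hasFDerivAt
    have : ((InnerProductSpace.toDual ℝ (Euc n)) ((dualNorm N z)⁻¹ • z)) =
        (dualNorm N z)⁻¹ • innerSL ℝ z := by
      ext w
      simp [real_inner_smul_left]
    rw [hasGradientAt_iff_hasFDerivAt, this]
    exact hfd2
  exact hgrad.gradient

/-- `N(c • ξ) = c` when `N ξ = 1`, `0 ≤ c`. -/
lemma mk_val_smul (hN : IsMinkowskiNorm N) {ξ : Euc n} (hξ : N ξ = 1) {c : ℝ} (hc : 0 ≤ c) :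
    N (c • ξ) = c := by rw [mk_homog' hN hc, hξ, mul_one]

/-- 0-homogeneity of the gradient of `N`. -/
lemma gradient_N_smul (hN : IsMinkowskiNorm N) {v : Euc n} (hv : v ≠ 0) {c : ℝ} (hc : 0 < c) :
    gradient N (c • v) = gradient N v := by
  have hcv : c • v ≠ 0 := smul_ne_zero (ne_of_gt hc) hv
  have hdx := mk_differentiableAt hN hcv
  have hdv := mk_differentiableAt hN hv
  have hsmul : HasFDerivAt (fun w : Euc n => c • w) (c • ContinuousLinearMap.id ℝ (Euc n)) v := by
    have := (c • ContinuousLinearMap.id ℝ (Euc n)).hasFDerivAt (x := v)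
    convert this using 2
    simp
  have hcomp : HasFDerivAt (fun w : Euc n => N (c • w))
      ((fderiv ℝ N (c • v)).comp (c • ContinuousLinearMap.id ℝ (Euc n))) v := by
    exact hdx.hasFDerivAt.comp v hsmul
  have hconst : HasFDerivAt (fun w : Euc n => c * N w) (c • fderiv ℝ N v) v :=
    hdv.hasFDerivAt.const_mul c
  have heq : (fun w : Euc n => N (c • w)) = (fun w : Euc n => c * N w) :=
    funext fun w => mk_homog' hN (le_of_lt hc) w
  rw [heq] at hcomp
  have huniq := hcomp.unique hconst
  have hfd : fderiv ℝ N (c • v) = fderiv ℝ N v := by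
    apply ContinuousLinearMap.ext
    intro w
    have := congrArg (fun (L : Euc n →L[ℝ] ℝ) => L w) huniq
    simp only [ContinuousLinearMap.comp_apply, ContinuousLinearMap.smul_apply,
      ContinuousLinearMap.id_apply, ContinuousLinearMap.coe_smul', Pi.smul_apply] at this
    have hmap : (fderiv ℝ N (c • v)) (c • w) = c * (fderiv ℝ N (c • v)) w := by
      rw [ContinuousLinearMap.map_smul]; simp
    rw [hmap] at this
    have : (fderiv ℝ N (c • v)) w = (fderiv ℝ N v) w := by
      field_simp at this
      rw [smul_eq_mul] at this
      exact mul_left_cancel₀ (ne_of_gt hc) this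
    exact this
  unfold gradient
  rw [hfd]

end Dual3

section Calc
variable {n : ℕ}

lemma toDual_smul_eq (c : ℝ) (G : Euc n) :
    (InnerProductSpace.toDual ℝ (Euc n)) (c • G) =
      c • (InnerProductSpace.toDual ℝ (Euc n)) G := by
  ext w
  simp [InnerProductSpace.toDual_apply_apply, real_inner_smul_left]

lemma toDual_add_eq (G₁ G₂ : Euc n) :
    (InnerProductSpace.toDual ℝ (Euc n)) (G₁ + G₂) =
      (InnerProductSpace.toDual ℝ (Euc n)) G₁ + (InnerProductSpace.toDual ℝ (Euc n)) G₂ := by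
  ext w
  simp [InnerProductSpace.toDual_apply_apply, inner_add_left]

lemma HasGradientAt.rpow_c {f : Euc n → ℝ} {G x : Euc n}
    (hf : HasGradientAt f G x) {q : ℝ} (h : f x ≠ 0 ∨ 1 ≤ q) :
    HasGradientAt (fun w => f w ^ q) ((q * f x ^ (q - 1)) • G) x := by
  have h1 := (hasGradientAt_iff_hasFDerivAt.mp hf).rpow_const h
  rw [hasGradientAt_iff_hasFDerivAt, toDual_smul_eq]
  exact h1

lemma HasGradientAt.pow_two' {f : Euc n → ℝ} {G x : Euc n} (hf : HasGradientAt f G x) :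
    HasGradientAt (fun w => f w ^ 2) ((2 * f x) • G) x := by
  have h1 := (hasGradientAt_iff_hasFDerivAt.mp hf).mul (hasGradientAt_iff_hasFDerivAt.mp hf)
  have heq : (fun w => f w ^ 2) = fun w => f w * f w := funext fun w => by ring
  rw [heq, hasGradientAt_iff_hasFDerivAt, toDual_smul_eq, two_mul, add_smul]
  exact h1

lemma HasGradientAt.cmul {f : Euc n → ℝ} {G x : Euc n} (hf : HasGradientAt f G x) (c : ℝ) :
    HasGradientAt (fun w => c * f w) (c • G) x := by
  have h1 := (hasGradientAt_iff_hasFDerivAt.mp hf).const_mul c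
  rw [hasGradientAt_iff_hasFDerivAt, toDual_smul_eq]
  exact h1

lemma HasGradientAt.addc {f : Euc n → ℝ} {G x : Euc n} (hf : HasGradientAt f G x) (c : ℝ) :
    HasGradientAt (fun w => f w + c) G x := by
  have h1 := (hasGradientAt_iff_hasFDerivAt.mp hf).add_const c
  rw [hasGradientAt_iff_hasFDerivAt]
  exact h1

lemma HasGradientAt.cadd {f : Euc n → ℝ} {G x : Euc n} (hf : HasGradientAt f G x) (c : ℝ) :
    HasGradientAt (fun w => c + f w) G x := by
  have h1 := (hasGradientAt_iff_hasFDerivAt.mp hf).const_add c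
  rw [hasGradientAt_iff_hasFDerivAt]
  exact h1

lemma HasGradientAt.mul' {f₁ f₂ : Euc n → ℝ} {G₁ G₂ x : Euc n}
    (h1 : HasGradientAt f₁ G₁ x) (h2 : HasGradientAt f₂ G₂ x) :
    HasGradientAt (fun w => f₁ w * f₂ w) (f₁ x • G₂ + f₂ x • G₁) x := by
  have h3 := (hasGradientAt_iff_hasFDerivAt.mp h1).mul (hasGradientAt_iff_hasFDerivAt.mp h2)
  rw [hasGradientAt_iff_hasFDerivAt, toDual_add_eq, toDual_smul_eq, toDual_smul_eq]
  exact h3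

lemma hasFDerivAt_coord (i : Fin n) (y : Euc n) :
    HasFDerivAt (fun w : Euc n => w i) (EuclideanSpace.proj (𝕜 := ℝ) i) y :=
  (EuclideanSpace.proj (𝕜 := ℝ) i).hasFDerivAt

/-- Core divergence formula: `div (u • id) = n·u + ⟨∇u, y⟩`. -/
lemma div_smul_id {u : Euc n → ℝ} {Gu : Euc n} {y : Euc n} (hu : HasGradientAt u Gu y) :
    ∑ i, fderiv ℝ (fun w : Euc n => u w * w i) y (EuclideanSpace.single i 1)
      = n * u y + ⟪Gu, y⟫ := by
  have hterm : ∀ i : Fin n,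
      fderiv ℝ (fun w : Euc n => u w * w i) y (EuclideanSpace.single i 1)
        = u y + y i * Gu i := by
    intro i
    have hfd := (hasGradientAt_iff_hasFDerivAt.mp hu).mul (hasFDerivAt_coord i y)
    rw [show (fun w : Euc n => u w * w i) = u * (fun w : Euc n => w i) from rfl, hfd.fderiv]
    simp only [ContinuousLinearMap.add_apply, ContinuousLinearMap.smul_apply,
      smul_eq_mul]
    have h1 : (EuclideanSpace.proj (𝕜 := ℝ) i) (EuclideanSpace.single i (1:ℝ)) = 1 := by
      simp [EuclideanSpace.proj, EuclideanSpace.single_apply]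
    have h2 : ((InnerProductSpace.toDual ℝ (Euc n)) Gu) (EuclideanSpace.single i 1) = Gu i := by
      rw [InnerProductSpace.toDual_apply_apply]
      rw [EuclideanSpace.inner_single_right]
      simp
    rw [h1, h2]
    ring
  rw [Finset.sum_congr rfl (fun i _ => hterm i)]
  rw [Finset.sum_add_distrib]
  have hinner : ⟪Gu, y⟫ = ∑ i, Gu i * y i := by
    rw [PiLp.inner_apply]
    simp [RCLike.inner_apply]
    exact Finset.sum_congr rfl fun i _ => mul_comm _ _
  rw [hinner]
  simp [Finset.sum_const, Finset.card_univ, mul_comm]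

end Calc

section Z
variable {n : ℕ} {N : Euc n → ℝ}
/-- Gradient of `(N⁰)^q` at the origin vanishes for `q > 1`. -/
lemma hasGradientAt_dualNorm_rpow_zero (hN : IsMinkowskiNorm N) (hn : 0 < n)
    {q : ℝ} (hq : 1 < q) :
    HasGradientAt (fun w : Euc n => dualNorm N w ^ q) (0 : Euc n) 0 := by
  obtain ⟨R, hR, _, hRd⟩ := dualNorm_bound hN hn
  rw [hasGradientAt_iff_isLittleO, Asymptotics.isLittleO_iff]
  intro c hc
  have htend : Filter.Tendsto (fun w : Euc n => R ^ q * ‖w‖ ^ (q - 1)) (nhds 0) (nhds 0) := by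
    have h1 : Filter.Tendsto (fun w : Euc n => ‖w‖) (nhds 0) (nhds 0) := by
      simpa using continuous_norm.tendsto (0 : Euc n)
    have h2 : ContinuousAt (fun t : ℝ => t ^ (q - 1)) 0 :=
      Real.continuousAt_rpow_const 0 (q - 1) (Or.inr (by linarith))
    have h3 : Filter.Tendsto (fun w : Euc n => ‖w‖ ^ (q - 1)) (nhds 0) (nhds 0) := by
      have := h2.tendsto.comp h1
      simpa [Function.comp_def, Real.zero_rpow (by linarith : q - 1 ≠ 0)] using this
    have := h3.const_mul (R ^ q)
    simpa using this
  have hev : ∀ᶠ w : Euc n in nhds 0, R ^ q * ‖w‖ ^ (q - 1) < c :=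
    htend.eventually_lt_const hc
  filter_upwards [hev] with w hw
  have hd0 : dualNorm N (0 : Euc n) ^ q = 0 := by
    rw [dualNorm_zero hN hn, Real.zero_rpow (by linarith : q ≠ 0)]
  simp only [hd0, inner_zero_left, sub_zero, Real.norm_eq_abs, sub_zero]
  rcases eq_or_ne w 0 with rfl | hw0
  · simp [dualNorm_zero hN hn, Real.zero_rpow (by linarith : q ≠ 0)]
  · have hwn : (0:ℝ) < ‖w‖ := norm_pos_iff.mpr hw0
    have h1 : dualNorm N w ^ q ≤ (R * ‖w‖) ^ q :=
      Real.rpow_le_rpow (dualNorm_nonneg hN hn w) (hRd w) (by linarith)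
    have h2 : (R * ‖w‖) ^ q = R ^ q * (‖w‖ ^ (q-1) * ‖w‖) := by
      rw [Real.mul_rpow (le_of_lt hR) (norm_nonneg w)]
      congr 1
      rw [← Real.rpow_add_one (ne_of_gt hwn) (q-1)]
      congr 1
      ring
    have h3 : (0:ℝ) ≤ dualNorm N w ^ q := Real.rpow_nonneg (dualNorm_nonneg hN hn w) q
    rw [abs_of_nonneg h3]
    calc dualNorm N w ^ q ≤ R ^ q * (‖w‖ ^ (q-1) * ‖w‖) := by rw [← h2]; exact h1
    _ = (R ^ q * ‖w‖ ^ (q-1)) * ‖w‖ := by ring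
    _ ≤ c * ‖w‖ := mul_le_mul_of_nonneg_right (le_of_lt hw) (norm_nonneg w)

/-- Gradient of `(N⁰)²` at the origin vanishes. -/
lemma hasGradientAt_dualNorm_sq_zero (hN : IsMinkowskiNorm N) (hn : 0 < n) :
    HasGradientAt (fun w : Euc n => dualNorm N w ^ (2:ℕ)) (0 : Euc n) 0 := by
  have h := hasGradientAt_dualNorm_rpow_zero hN hn (q := 2) (by norm_num)
  have he : (fun w : Euc n => dualNorm N w ^ (2:ℝ)) = fun w => dualNorm N w ^ (2:ℕ) := by
    funext w
    rw [show ((2:ℝ) = ((2:ℕ):ℝ)) by norm_num, Real.rpow_natCast]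
  rwa [he] at h

end Z

variable {m k : ℕ}

/-- The dual anisotropic Minkowski gauge
`ρ(z,σ) = (Φ⁰(z)^{2(α+1)} + 4(α+1)²Ψ⁰(σ)²)^{1/(2(α+1))}`. -/
def rho (α : ℝ) (Φ : Euc m → ℝ) (Ψ : Euc k → ℝ) (x : Euc m × Euc k) : ℝ :=
  (dualNorm Φ x.1 ^ (2 * (α + 1)) + 4 * (α + 1) ^ 2 * dualNorm Ψ x.2 ^ 2) ^ (1 / (2 * (α + 1)))

/-- Gradient in the `z` variables. -/
def gradZ (u : Euc m × Euc k → ℝ) (x : Euc m × Euc k) : Euc m :=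
  gradient (fun z => u (z, x.2)) x.1

/-- Gradient in the `σ` variables. -/
def gradS (u : Euc m × Euc k → ℝ) (x : Euc m × Euc k) : Euc k :=
  gradient (fun σ => u (x.1, σ)) x.2

/-- Divergence in the `z` variables. -/
def divZ (V : Euc m × Euc k → Euc m) (x : Euc m × Euc k) : ℝ :=
  ∑ i, fderiv ℝ (fun z => V (z, x.2) i) x.1 (EuclideanSpace.single i 1)

/-- Divergence in the `σ` variables. -/
def divS (V : Euc m × Euc k → Euc k) (x : Euc m × Euc k) : ℝ :=
  ∑ i, fderiv ℝ (fun σ => V (x.1, σ) i) x.2 (EuclideanSpace.single i 1)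

/-- The Finsler Laplacian in the `z` variables, `Δ_Φ(u) = div_z(Φ(∇_z u) ∇Φ(∇_z u))`. -/
def finslerLapZ (Φ : Euc m → ℝ) (u : Euc m × Euc k → ℝ) (x : Euc m × Euc k) : ℝ :=
  divZ (fun y => Φ (gradZ u y) • gradient Φ (gradZ u y)) x

/-- The Finsler Laplacian in the `σ` variables, `Δ_Ψ(u) = div_σ(Ψ(∇_σ u) ∇Ψ(∇_σ u))`. -/
def finslerLapS (Ψ : Euc k → ℝ) (u : Euc m × Euc k → ℝ) (x : Euc m × Euc k) : ℝ :=
  divS (fun y => Ψ (gradS u y) • gradient Ψ (gradS u y)) x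

/-- The operator `𝓛_{α,p}`. -/
def Lop (α p : ℝ) (Φ : Euc m → ℝ) (Ψ : Euc k → ℝ) (u : Euc m × Euc k → ℝ)
    (x : Euc m × Euc k) : ℝ :=
  divZ (fun y =>
      (Φ (gradZ u y) ^ 2 + dualNorm Φ y.1 ^ (2 * α) / 4 * Ψ (gradS u y) ^ 2) ^ ((p - 2) / 2) •
        (Φ (gradZ u y) • gradient Φ (gradZ u y))) x
  + divS (fun y =>
      (Φ (gradZ u y) ^ 2 + dualNorm Φ y.1 ^ (2 * α) / 4 * Ψ (gradS u y) ^ 2) ^ ((p - 2) / 2) •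
        ((dualNorm Φ y.1 ^ (2 * α) / 4 * Ψ (gradS u y)) • gradient Ψ (gradS u y))) x

/-- The operator `𝓛_{α,2}(u) = Δ_Φ(u) + (Φ⁰(z)^{2α}/4) Δ_Ψ(u)`. -/
def Lop2 (α : ℝ) (Φ : Euc m → ℝ) (Ψ : Euc k → ℝ) (u : Euc m × Euc k → ℝ)
    (x : Euc m × Euc k) : ℝ :=
  finslerLapZ Φ u x + dualNorm Φ x.1 ^ (2 * α) / 4 * finslerLapS Ψ u x

/-- `𝓛_{α,2}(ρ) = ((Q−1)/ρ)·(Φ⁰(z)/ρ)^{2α}` on `ℝ^N ∖ {0}`, where `Q = m + (α+1)k`. -/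
theorem Lop2_of_rho (m k : ℕ) (hm : 1 ≤ m) (hk : 1 ≤ k) (α : ℝ) (hα : 0 < α)
    (Φ : Euc m → ℝ) (Ψ : Euc k → ℝ) (hΦ : IsMinkowskiNorm Φ) (hΨ : IsMinkowskiNorm Ψ)
    (Q : ℝ) (hQ : Q = (m : ℝ) + (α + 1) * (k : ℝ)) :
    ∀ x : Euc m × Euc k, x ≠ 0 →
      Lop2 α Φ Ψ (rho α Φ Ψ) x =
        (Q - 1) / rho α Φ Ψ x * (dualNorm Φ x.1 / rho α Φ Ψ x) ^ (2 * α) := by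
  -- outline proof with intermediate sorries
  have hm' : 0 < m := hm
  have hk' : 0 < k := hk
  set p : ℝ := 2 * (α + 1) with hpdef
  have hp0 : 0 < p := by rw [hpdef]; nlinarith
  have hp1 : 1 < p := by rw [hpdef]; nlinarith
  set e : ℝ := 1 / (2 * (α + 1)) with hedef
  have hep1 : e * p = 1 := by rw [hedef, hpdef]; field_simp
  have he0 : 0 < e := by rw [hedef]; positivity
  have he1 : e < 1 := by
    nlinarith [hep1, he0, hp1]
  set c2 : ℝ := 4 * (α + 1) ^ 2 with hc2def
  have hc2pos : 0 < c2 := by rw [hc2def]; positivity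
  set sf : Euc m × Euc k → ℝ := fun y => dualNorm Φ y.1 ^ p + c2 * dualNorm Ψ y.2 ^ 2 with hsfdef
  have hrho : ∀ y : Euc m × Euc k, rho α Φ Ψ y = sf y ^ e := fun y => rfl
  have hprodne : ∀ y : Euc m × Euc k, y ≠ 0 → y.1 ≠ 0 ∨ y.2 ≠ 0 := by
    intro y hy
    by_contra hcon
    push_neg at hcon
    exact hy (Prod.ext hcon.1 hcon.2)
  have hs_nonneg : ∀ y : Euc m × Euc k, 0 ≤ sf y := by
    intro y
    have h1 : 0 ≤ dualNorm Φ y.1 ^ p := Real.rpow_nonneg (dualNorm_nonneg hΦ hm' y.1) p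
    have h2 : 0 ≤ c2 * dualNorm Ψ y.2 ^ 2 := by positivity
    rw [hsfdef]; dsimp only; linarith
  have hs_pos : ∀ y : Euc m × Euc k, y ≠ 0 → 0 < sf y := by
    intro y hy
    rcases hprodne y hy with h1 | h2
    · have hg : 0 < dualNorm Φ y.1 := dualNorm_pos hΦ hm' h1
      have hgp : 0 < dualNorm Φ y.1 ^ p := Real.rpow_pos_of_pos hg p
      have h2 : 0 ≤ c2 * dualNorm Ψ y.2 ^ 2 := by positivity
      rw [hsfdef]; dsimp only; linarith
    · have hh : 0 < dualNorm Ψ y.2 := dualNorm_pos hΨ hk' h2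
      have h1 : 0 ≤ dualNorm Φ y.1 ^ p := Real.rpow_nonneg (dualNorm_nonneg hΦ hm' y.1) p
      have hB : 0 < c2 * dualNorm Ψ y.2 ^ 2 := by positivity
      rw [hsfdef]; dsimp only; linarith
  -- gradient of the z-slice of rho
  have hgz : ∀ y : Euc m × Euc k, y ≠ 0 →
      HasGradientAt (fun w => rho α Φ Ψ (w, y.2))
        ((sf y ^ (e - 1) * dualNorm Φ y.1 ^ (p - 1)) • gradient (dualNorm Φ) y.1) y.1 := by
    intro y hy
    have hfun : (fun w : Euc m => rho α Φ Ψ (w, y.2))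
        = fun w => (dualNorm Φ w ^ p + c2 * dualNorm Ψ y.2 ^ 2) ^ e := rfl
    have hspos : 0 < sf y := hs_pos y hy
    have hsz : dualNorm Φ y.1 ^ p + c2 * dualNorm Ψ y.2 ^ 2 = sf y := rfl
    rcases eq_or_ne y.1 0 with h1 | h1
    · have hz1 : HasGradientAt (fun w : Euc m => dualNorm Φ w ^ p) 0 0 :=
        hasGradientAt_dualNorm_rpow_zero hΦ hm' hp1
      have hz2 := hz1.addc (c2 * dualNorm Ψ y.2 ^ 2)
      have hval0 : dualNorm Φ (0 : Euc m) ^ p + c2 * dualNorm Ψ y.2 ^ 2 = sf y := by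
        rw [← h1]
      have hz3 := hz2.rpow_c (q := e) (Or.inl (by rw [hval0]; exact ne_of_gt hspos))
      have hgoal0 : (sf y ^ (e - 1) * dualNorm Φ y.1 ^ (p - 1)) • gradient (dualNorm Φ) y.1
          = (0 : Euc m) := by
        rw [h1, dualNorm_zero hΦ hm', Real.zero_rpow (by linarith : p - 1 ≠ 0), mul_zero,
          zero_smul]
      rw [hfun, hgoal0, h1]
      simpa using hz3
    · obtain ⟨ξ, hmaxξ, -⟩ := exists_isDualMax hΦ hm' y.1
      have hgg : HasGradientAt (dualNorm Φ) ξ y.1 := hasGradientAt_dualNorm hΦ hm' h1 hmaxξ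
      have hgpos : 0 < dualNorm Φ y.1 := dualNorm_pos hΦ hm' h1
      have hb1 : HasGradientAt (fun w : Euc m => dualNorm Φ w ^ p)
          ((p * dualNorm Φ y.1 ^ (p - 1)) • ξ) y.1 := hgg.rpow_c (Or.inl (ne_of_gt hgpos))
      have hb2 := hb1.addc (c2 * dualNorm Ψ y.2 ^ 2)
      have hb3 := hb2.rpow_c (q := e) (Or.inl (by rw [hsz]; exact ne_of_gt hspos))
      rw [hfun, hgg.gradient]
      have hco : (sf y ^ (e - 1) * dualNorm Φ y.1 ^ (p - 1)) • ξ
          = (e * (dualNorm Φ y.1 ^ p + c2 * dualNorm Ψ y.2 ^ 2) ^ (e - 1))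
              • ((p * dualNorm Φ y.1 ^ (p - 1)) • ξ) := by
        rw [hsz, smul_smul]
        congr 1
        rw [show e * sf y ^ (e - 1) * (p * dualNorm Φ y.1 ^ (p - 1))
            = (e * p) * (sf y ^ (e - 1) * dualNorm Φ y.1 ^ (p - 1)) from by ring,
          hep1, one_mul]
      rw [hco]
      exact hb3
  -- gradient of the σ-slice of rho
  have hec2 : e * (c2 * 2) = 4 * (α + 1) := by
    rw [hedef, hc2def]; field_simp
  have hgs : ∀ y : Euc m × Euc k, y ≠ 0 →
      HasGradientAt (fun τ => rho α Φ Ψ (y.1, τ))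
        ((4 * (α + 1) * sf y ^ (e - 1) * dualNorm Ψ y.2) • gradient (dualNorm Ψ) y.2) y.2 := by
    intro y hy
    have hfun : (fun τ : Euc k => rho α Φ Ψ (y.1, τ))
        = fun τ => (dualNorm Φ y.1 ^ p + c2 * dualNorm Ψ τ ^ 2) ^ e := rfl
    have hspos : 0 < sf y := hs_pos y hy
    have hsz : dualNorm Φ y.1 ^ p + c2 * dualNorm Ψ y.2 ^ 2 = sf y := rfl
    rcases eq_or_ne y.2 0 with h2 | h2
    · have hz1 : HasGradientAt (fun τ : Euc k => dualNorm Ψ τ ^ 2) 0 0 :=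
        hasGradientAt_dualNorm_sq_zero hΨ hk'
      have hz2 := (hz1.cmul c2).cadd (dualNorm Φ y.1 ^ p)
      have hval0 : dualNorm Φ y.1 ^ p + c2 * dualNorm Ψ (0 : Euc k) ^ 2 = sf y := by
        rw [← h2]
      have hz3 := hz2.rpow_c (q := e) (Or.inl (by rw [hval0]; exact ne_of_gt hspos))
      have hgoal0 : (4 * (α + 1) * sf y ^ (e - 1) * dualNorm Ψ y.2) • gradient (dualNorm Ψ) y.2
          = (0 : Euc k) := by
        rw [h2, dualNorm_zero hΨ hk', mul_zero, zero_smul]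
      rw [hfun, hgoal0, h2]
      simpa using hz3
    · obtain ⟨η, hmaxη, -⟩ := exists_isDualMax hΨ hk' y.2
      have hh : HasGradientAt (dualNorm Ψ) η y.2 := hasGradientAt_dualNorm hΨ hk' h2 hmaxη
      have hb1 := hh.pow_two'
      have hb2 := (hb1.cmul c2).cadd (dualNorm Φ y.1 ^ p)
      have hb3 := hb2.rpow_c (q := e) (Or.inl (by rw [hsz]; exact ne_of_gt hspos))
      rw [hfun, hh.gradient]
      have hco : (4 * (α + 1) * sf y ^ (e - 1) * dualNorm Ψ y.2) • η
          = (e * (dualNorm Φ y.1 ^ p + c2 * dualNorm Ψ y.2 ^ 2) ^ (e - 1))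
              • (c2 • ((2 * dualNorm Ψ y.2) • η)) := by
        rw [hsz, smul_smul, smul_smul]
        congr 1
        rw [show e * sf y ^ (e - 1) * c2 * (2 * dualNorm Ψ y.2)
            = (e * (c2 * 2)) * (sf y ^ (e - 1) * dualNorm Ψ y.2) from by ring,
          hec2, ← mul_assoc]
      rw [hco]
      exact hb3
  -- the z-vector field pointwise
  have hV : ∀ y : Euc m × Euc k, y ≠ 0 →
      Φ (gradZ (rho α Φ Ψ) y) • gradient Φ (gradZ (rho α Φ Ψ) y)
        = (sf y ^ (e - 1) * dualNorm Φ y.1 ^ (p - 2)) • y.1 := by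
    intro y hy
    have hgrad : gradZ (rho α Φ Ψ) y
        = (sf y ^ (e - 1) * dualNorm Φ y.1 ^ (p - 1)) • gradient (dualNorm Φ) y.1 :=
      (hgz y hy).gradient
    rcases eq_or_ne y.1 0 with h1 | h1
    · have hc0 : sf y ^ (e - 1) * dualNorm Φ y.1 ^ (p - 1) = 0 := by
        rw [h1, dualNorm_zero hΦ hm', Real.zero_rpow (by linarith : p - 1 ≠ 0), mul_zero]
      have hgz0 : gradZ (rho α Φ Ψ) y = 0 := by rw [hgrad, hc0, zero_smul]
      rw [hgz0, mk_zero hΦ, zero_smul, h1, smul_zero]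
    · obtain ⟨ξ, hmaxξ, -⟩ := exists_isDualMax hΦ hm' y.1
      have hgg : HasGradientAt (dualNorm Φ) ξ y.1 := hasGradientAt_dualNorm hΦ hm' h1 hmaxξ
      have hgpos : 0 < dualNorm Φ y.1 := dualNorm_pos hΦ hm' h1
      have hspos : 0 < sf y := hs_pos y hy
      have hξ0 : ξ ≠ 0 := by
        intro hcon
        have hcon2 := hmaxξ.1
        rw [hcon, mk_zero hΦ] at hcon2
        norm_num at hcon2
      have h5 := Real.rpow_pos_of_pos hspos (e - 1)
      have h6 := Real.rpow_pos_of_pos hgpos (p - 1)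
      set c : ℝ := sf y ^ (e - 1) * dualNorm Φ y.1 ^ (p - 1) with hcdef
      have hcpos : 0 < c := mul_pos h5 h6
      have hgzval : gradZ (rho α Φ Ψ) y = c • ξ := by rw [hgrad, hgg.gradient]
      rw [hgzval, mk_val_smul hΦ hmaxξ.1 (le_of_lt hcpos),
        gradient_N_smul hΦ hξ0 hcpos, gradient_N_at_dualMax hΦ hm' h1 hmaxξ,
        smul_smul, hcdef]
      congr 1
      rw [mul_assoc, ← Real.rpow_neg_one (dualNorm Φ y.1), ← Real.rpow_add hgpos]
      congr 1
      ring
  -- the σ-vector field pointwise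
  have hW : ∀ y : Euc m × Euc k, y ≠ 0 →
      Ψ (gradS (rho α Φ Ψ) y) • gradient Ψ (gradS (rho α Φ Ψ) y)
        = (4 * (α + 1) * sf y ^ (e - 1)) • y.2 := by
    intro y hy
    have hgrad : gradS (rho α Φ Ψ) y
        = (4 * (α + 1) * sf y ^ (e - 1) * dualNorm Ψ y.2) • gradient (dualNorm Ψ) y.2 :=
      (hgs y hy).gradient
    rcases eq_or_ne y.2 0 with h2 | h2
    · have hc0 : 4 * (α + 1) * sf y ^ (e - 1) * dualNorm Ψ y.2 = 0 := by
        rw [h2, dualNorm_zero hΨ hk', mul_zero]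
      have hgs0 : gradS (rho α Φ Ψ) y = 0 := by rw [hgrad, hc0, zero_smul]
      rw [hgs0, mk_zero hΨ, zero_smul, h2, smul_zero]
    · obtain ⟨η, hmaxη, -⟩ := exists_isDualMax hΨ hk' y.2
      have hh : HasGradientAt (dualNorm Ψ) η y.2 := hasGradientAt_dualNorm hΨ hk' h2 hmaxη
      have hhpos : 0 < dualNorm Ψ y.2 := dualNorm_pos hΨ hk' h2
      have hspos : 0 < sf y := hs_pos y hy
      have hη0 : η ≠ 0 := by
        intro hcon
        have hcon2 := hmaxη.1
        rw [hcon, mk_zero hΨ] at hcon2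
        norm_num at hcon2
      have h5 := Real.rpow_pos_of_pos hspos (e - 1)
      have h41 : (0:ℝ) < 4 * (α + 1) := by linarith
      set d : ℝ := 4 * (α + 1) * sf y ^ (e - 1) * dualNorm Ψ y.2 with hddef
      have hdpos : 0 < d := mul_pos (mul_pos h41 h5) hhpos
      have hgsval : gradS (rho α Φ Ψ) y = d • η := by rw [hgrad, hh.gradient]
      rw [hgsval, mk_val_smul hΨ hmaxη.1 (le_of_lt hdpos),
        gradient_N_smul hΨ hη0 hdpos, gradient_N_at_dualMax hΨ hk' h2 hmaxη,
        smul_smul, hddef]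
      congr 1
      rw [mul_assoc, mul_inv_cancel₀ (ne_of_gt hhpos), mul_one]
  intro x hx0
  rcases eq_or_ne x.1 0 with hz0 | hz0
  · -- case x.1 = 0 : both sides vanish
    have hσ : x.2 ≠ 0 := by
      rcases hprodne x hx0 with ha | ha
      · exact absurd hz0 ha
      · exact ha
    have hg0 : dualNorm Φ x.1 = 0 := by rw [hz0]; exact dualNorm_zero hΦ hm'
    have h2α : (2 * α : ℝ) ≠ 0 := by positivity
    have hrhs : (Q - 1) / rho α Φ Ψ x * (dualNorm Φ x.1 / rho α Φ Ψ x) ^ (2 * α) = 0 := by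
      rw [hg0, zero_div, Real.zero_rpow h2α, mul_zero]
    rw [hrhs]
    have hp2pos : 0 < p - 2 := by rw [hpdef]; linarith
    have hBpos : 0 < c2 * dualNorm Ψ x.2 ^ 2 := by
      have := dualNorm_pos hΨ hk' hσ
      positivity
    obtain ⟨R, hR, hRξ, hRd⟩ := dualNorm_bound hΦ hm'
    have hcont : ContinuousAt (fun w : Euc m => sf (w, x.2)) 0 := by
      have h1 : Continuous (dualNorm Φ) := dualNorm_continuous hΦ hm'
      have h2 : ContinuousAt (fun t : ℝ => t ^ p) (dualNorm Φ (0 : Euc m)) :=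
        Real.continuousAt_rpow_const _ _ (Or.inr (le_of_lt hp0))
      have h3 : ContinuousAt (fun w : Euc m => dualNorm Φ w ^ p) 0 := h2.comp h1.continuousAt
      exact h3.add continuousAt_const
    have hsf0 : sf ((0 : Euc m), x.2) = c2 * dualNorm Ψ x.2 ^ 2 := by
      show dualNorm Φ (0 : Euc m) ^ p + c2 * dualNorm Ψ x.2 ^ 2 = c2 * dualNorm Ψ x.2 ^ 2
      rw [dualNorm_zero hΦ hm', Real.zero_rpow (ne_of_gt hp0), zero_add]
    set B := c2 * dualNorm Ψ x.2 ^ 2 with hBdef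
    set M := (B / 2) ^ (e - 1) with hMdef
    have hMpos : 0 < M := Real.rpow_pos_of_pos (by linarith) _
    have hev1 : ∀ᶠ w : Euc m in nhds 0, B / 2 < sf (w, x.2) := by
      have ht : Filter.Tendsto (fun w : Euc m => sf (w, x.2)) (nhds 0) (nhds B) := by
        rw [← hsf0]
        exact hcont.tendsto
      exact ht.eventually_const_lt (by linarith)
    have hterm : ∀ i : Fin m, fderiv ℝ
        (fun w : Euc m => (Φ (gradZ (rho α Φ Ψ) (w, x.2)) •
           gradient Φ (gradZ (rho α Φ Ψ) (w, x.2))) i) x.1 (EuclideanSpace.single i 1) = 0 := by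
      intro i
      have hfe : (fun w : Euc m => (Φ (gradZ (rho α Φ Ψ) (w, x.2)) •
          gradient Φ (gradZ (rho α Φ Ψ) (w, x.2))) i)
          = fun w => (sf (w, x.2) ^ (e - 1) * dualNorm Φ w ^ (p - 2)) * w i := by
        funext w
        have hne : ((w, x.2) : Euc m × Euc k) ≠ 0 := by
          intro hcon
          rw [Prod.ext_iff] at hcon
          exact hσ hcon.2
        rw [hV (w, x.2) hne, PiLp.smul_apply, smul_eq_mul]
      rw [hfe]
      have hderiv : HasFDerivAt
          (fun w : Euc m => (sf (w, x.2) ^ (e - 1) * dualNorm Φ w ^ (p - 2)) * w i)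
          (0 : Euc m →L[ℝ] ℝ) (0 : Euc m) := by
        rw [hasFDerivAt_iff_isLittleO_nhds_zero, Asymptotics.isLittleO_iff]
        intro c hc
        have htend : Filter.Tendsto (fun w : Euc m => M * R ^ (p - 2) * ‖w‖ ^ (p - 2))
            (nhds 0) (nhds 0) := by
          have h1 : Filter.Tendsto (fun w : Euc m => ‖w‖) (nhds 0) (nhds 0) := by
            simpa using continuous_norm.tendsto (0 : Euc m)
          have h2 : ContinuousAt (fun t : ℝ => t ^ (p - 2)) 0 :=
            Real.continuousAt_rpow_const 0 (p - 2) (Or.inr (le_of_lt hp2pos))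
          have h3 : Filter.Tendsto (fun w : Euc m => ‖w‖ ^ (p - 2)) (nhds 0) (nhds 0) := by
            have := h2.tendsto.comp h1
            simpa [Function.comp_def, Real.zero_rpow (ne_of_gt hp2pos)] using this
          have := h3.const_mul (M * R ^ (p - 2))
          simpa [mul_comm] using this
        have hev2 : ∀ᶠ w : Euc m in nhds 0, M * R ^ (p - 2) * ‖w‖ ^ (p - 2) < c :=
          htend.eventually_lt_const hc
        filter_upwards [hev1, hev2] with w hw1 hw2
        have hf0 : (sf ((0:Euc m), x.2) ^ (e - 1) * dualNorm Φ (0:Euc m) ^ (p - 2))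
            * (0 : Euc m) i = 0 := by
          simp
        simp only [zero_add, ContinuousLinearMap.zero_apply, sub_zero, hf0]
        have hcoord : |w i| ≤ ‖w‖ := by
          have h1 : ⟪w, EuclideanSpace.single i (1:ℝ)⟫ = w i := by
            rw [EuclideanSpace.inner_single_right]; simp
          have h2 := abs_real_inner_le_norm w (EuclideanSpace.single i (1:ℝ))
          rw [h1, EuclideanSpace.norm_single] at h2
          simpa using h2
        have hS1 : sf (w, x.2) ^ (e - 1) ≤ M := by
          rw [hMdef]
          exact Real.rpow_le_rpow_of_nonpos (by linarith) (le_of_lt hw1) (by linarith)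
        have hS1pos : 0 ≤ sf (w, x.2) ^ (e - 1) :=
          Real.rpow_nonneg (le_of_lt (lt_trans (half_pos hBpos) hw1)) _
        have hG2 : dualNorm Φ w ^ (p - 2) ≤ R ^ (p - 2) * ‖w‖ ^ (p - 2) := by
          rw [← Real.mul_rpow (le_of_lt hR) (norm_nonneg w)]
          exact Real.rpow_le_rpow (dualNorm_nonneg hΦ hm' w) (hRd w) (le_of_lt hp2pos)
        have hG2pos : 0 ≤ dualNorm Φ w ^ (p - 2) :=
          Real.rpow_nonneg (dualNorm_nonneg hΦ hm' w) _
        rw [Real.norm_eq_abs]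
        have habs : |(sf (w, x.2) ^ (e - 1) * dualNorm Φ w ^ (p - 2)) * w i|
            ≤ (M * (R ^ (p - 2) * ‖w‖ ^ (p - 2))) * ‖w‖ := by
          rw [abs_mul, abs_of_nonneg (mul_nonneg hS1pos hG2pos)]
          apply mul_le_mul
          · exact mul_le_mul hS1 hG2 hG2pos (le_of_lt hMpos)
          · exact hcoord
          · exact abs_nonneg _
          · positivity
        calc |(sf (w, x.2) ^ (e - 1) * dualNorm Φ w ^ (p - 2)) * w i|
            ≤ (M * (R ^ (p - 2) * ‖w‖ ^ (p - 2))) * ‖w‖ := habs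
        _ = (M * R ^ (p - 2) * ‖w‖ ^ (p - 2)) * ‖w‖ := by ring
        _ ≤ c * ‖w‖ := mul_le_mul_of_nonneg_right (le_of_lt hw2) (norm_nonneg w)
      rw [hz0, hderiv.fderiv]
      simp
    have hlapZ : finslerLapZ Φ (rho α Φ Ψ) x = 0 := by
      have hrfl : finslerLapZ Φ (rho α Φ Ψ) x
          = ∑ i, fderiv ℝ (fun w : Euc m => (Φ (gradZ (rho α Φ Ψ) (w, x.2)) •
              gradient Φ (gradZ (rho α Φ Ψ) (w, x.2))) i) x.1 (EuclideanSpace.single i 1) := rfl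
      rw [hrfl, Finset.sum_congr rfl (fun i _ => hterm i)]
      simp
    have hlop : Lop2 α Φ Ψ (rho α Φ Ψ) x = finslerLapZ Φ (rho α Φ Ψ) x
        + dualNorm Φ x.1 ^ (2 * α) / 4 * finslerLapS Ψ (rho α Φ Ψ) x := rfl
    rw [hlop, hlapZ, hg0, Real.zero_rpow h2α, zero_div, zero_mul, add_zero]
  · -- main case x.1 ≠ 0
    obtain ⟨ξ, hmaxξ, -⟩ := exists_isDualMax hΦ hm' x.1
    have hgg : HasGradientAt (dualNorm Φ) ξ x.1 := hasGradientAt_dualNorm hΦ hm' hz0 hmaxξ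
    have hG : 0 < dualNorm Φ x.1 := dualNorm_pos hΦ hm' hz0
    have hS : 0 < sf x := hs_pos x hx0
    have hinnerξ : ⟪ξ, x.1⟫ = dualNorm Φ x.1 := by
      rw [real_inner_comm]; exact hmaxξ.2.symm
    have hp2pos : 0 < p - 2 := by rw [hpdef]; linarith
    have hsz : dualNorm Φ x.1 ^ p + c2 * dualNorm Ψ x.2 ^ 2 = sf x := rfl
    -- gradient pieces in the z-direction
    have hb1 : HasGradientAt (fun w : Euc m => dualNorm Φ w ^ p)
        ((p * dualNorm Φ x.1 ^ (p - 1)) • ξ) x.1 := hgg.rpow_c (Or.inl (ne_of_gt hG))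
    have hb2 := hb1.addc (c2 * dualNorm Ψ x.2 ^ 2)
    have hf1 : HasGradientAt (fun w : Euc m => sf (w, x.2) ^ (e - 1))
        (((e - 1) * sf x ^ (e - 1 - 1)) • ((p * dualNorm Φ x.1 ^ (p - 1)) • ξ)) x.1 := by
      have h0 := hb2.rpow_c (q := e - 1) (Or.inl (by rw [hsz]; exact ne_of_gt hS))
      rw [show (fun w : Euc m => sf (w, x.2) ^ (e - 1))
          = fun w => (dualNorm Φ w ^ p + c2 * dualNorm Ψ x.2 ^ 2) ^ (e - 1) from rfl, ← hsz]
      exact h0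
    have hf2 : HasGradientAt (fun w : Euc m => dualNorm Φ w ^ (p - 2))
        (((p - 2) * dualNorm Φ x.1 ^ (p - 2 - 1)) • ξ) x.1 :=
      hgg.rpow_c (Or.inl (ne_of_gt hG))
    have hu1g : HasGradientAt (fun w : Euc m => sf (w, x.2) ^ (e - 1) * dualNorm Φ w ^ (p - 2))
        ((sf x ^ (e - 1)) • (((p - 2) * dualNorm Φ x.1 ^ (p - 2 - 1)) • ξ)
          + (dualNorm Φ x.1 ^ (p - 2)) •
              (((e - 1) * sf x ^ (e - 1 - 1)) • ((p * dualNorm Φ x.1 ^ (p - 1)) • ξ))) x.1 :=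
      hf1.mul' hf2
    -- the z-divergence
    have hlapZval : finslerLapZ Φ (rho α Φ Ψ) x
        = m * (sf x ^ (e - 1) * dualNorm Φ x.1 ^ (p - 2))
          + ⟪(sf x ^ (e - 1)) • (((p - 2) * dualNorm Φ x.1 ^ (p - 2 - 1)) • ξ)
            + (dualNorm Φ x.1 ^ (p - 2)) •
                (((e - 1) * sf x ^ (e - 1 - 1)) • ((p * dualNorm Φ x.1 ^ (p - 1)) • ξ)), x.1⟫ := by
      have hrfl : finslerLapZ Φ (rho α Φ Ψ) x = ∑ i, fderiv ℝ
          (fun w : Euc m => (Φ (gradZ (rho α Φ Ψ) (w, x.2)) •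
             gradient Φ (gradZ (rho α Φ Ψ) (w, x.2))) i) x.1 (EuclideanSpace.single i 1) := rfl
      have hcongr : ∀ i : Fin m, fderiv ℝ
          (fun w : Euc m => (Φ (gradZ (rho α Φ Ψ) (w, x.2)) •
             gradient Φ (gradZ (rho α Φ Ψ) (w, x.2))) i) x.1 (EuclideanSpace.single i 1)
          = fderiv ℝ (fun w : Euc m => (sf (w, x.2) ^ (e - 1) * dualNorm Φ w ^ (p - 2)) * w i)
              x.1 (EuclideanSpace.single i 1) := by
        intro i
        have hev : (fun w : Euc m => (Φ (gradZ (rho α Φ Ψ) (w, x.2)) •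
            gradient Φ (gradZ (rho α Φ Ψ) (w, x.2))) i)
            =ᶠ[nhds x.1] fun w => (sf (w, x.2) ^ (e - 1) * dualNorm Φ w ^ (p - 2)) * w i := by
          filter_upwards [isOpen_compl_singleton.eventually_mem hz0] with w hw
          have hne : ((w, x.2) : Euc m × Euc k) ≠ 0 := by
            intro hcon
            exact hw (congrArg Prod.fst hcon)
          rw [hV (w, x.2) hne, PiLp.smul_apply, smul_eq_mul]
        rw [hev.fderiv_eq]
      rw [hrfl, Finset.sum_congr rfl (fun i _ => hcongr i)]
      exact div_smul_id hu1g
    have hGu1 : ⟪(sf x ^ (e - 1)) • (((p - 2) * dualNorm Φ x.1 ^ (p - 2 - 1)) • ξ)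
            + (dualNorm Φ x.1 ^ (p - 2)) •
                (((e - 1) * sf x ^ (e - 1 - 1)) • ((p * dualNorm Φ x.1 ^ (p - 1)) • ξ)), x.1⟫
        = sf x ^ (e - 1) * ((p - 2) * dualNorm Φ x.1 ^ (p - 2 - 1)) * dualNorm Φ x.1
          + dualNorm Φ x.1 ^ (p - 2) * ((e - 1) * sf x ^ (e - 1 - 1))
              * (p * dualNorm Φ x.1 ^ (p - 1)) * dualNorm Φ x.1 := by
      simp only [inner_add_left, real_inner_smul_left]
      rw [hinnerξ]
      ring
    -- gradient pieces in the σ-direction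
    have hbase : HasGradientAt (fun τ : Euc k => dualNorm Φ x.1 ^ p + c2 * dualNorm Ψ τ ^ 2)
        ((c2 * (2 * dualNorm Ψ x.2)) • gradient (dualNorm Ψ) x.2) x.2 := by
      rcases eq_or_ne x.2 0 with h2 | h2
      · have hz1 := hasGradientAt_dualNorm_sq_zero hΨ hk'
        have hz2 := (hz1.cmul c2).cadd (dualNorm Φ x.1 ^ p)
        have hcz : (c2 * (2 * dualNorm Ψ x.2)) • gradient (dualNorm Ψ) x.2 = 0 := by
          rw [h2, dualNorm_zero hΨ hk']
          simp
        rw [hcz, h2]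
        simpa using hz2
      · obtain ⟨η, hmaxη, -⟩ := exists_isDualMax hΨ hk' x.2
        have hh : HasGradientAt (dualNorm Ψ) η x.2 := hasGradientAt_dualNorm hΨ hk' h2 hmaxη
        have h0 := (hh.pow_two'.cmul c2).cadd (dualNorm Φ x.1 ^ p)
        rw [hh.gradient,
          show (c2 * (2 * dualNorm Ψ x.2)) • η = c2 • ((2 * dualNorm Ψ x.2) • η) from
            by rw [smul_smul]]
        exact h0
    have hf3 : HasGradientAt (fun τ : Euc k => sf (x.1, τ) ^ (e - 1))
        (((e - 1) * sf x ^ (e - 1 - 1)) •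
          ((c2 * (2 * dualNorm Ψ x.2)) • gradient (dualNorm Ψ) x.2)) x.2 := by
      have h0 := hbase.rpow_c (q := e - 1) (Or.inl (by rw [hsz]; exact ne_of_gt hS))
      rw [show (fun τ : Euc k => sf (x.1, τ) ^ (e - 1))
          = fun τ => (dualNorm Φ x.1 ^ p + c2 * dualNorm Ψ τ ^ 2) ^ (e - 1) from rfl, ← hsz]
      exact h0
    have hu2g : HasGradientAt (fun τ : Euc k => 4 * (α + 1) * sf (x.1, τ) ^ (e - 1))
        ((4 * (α + 1)) • (((e - 1) * sf x ^ (e - 1 - 1)) •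
          ((c2 * (2 * dualNorm Ψ x.2)) • gradient (dualNorm Ψ) x.2))) x.2 := hf3.cmul _
    have hlapSval : finslerLapS Ψ (rho α Φ Ψ) x
        = k * (4 * (α + 1) * sf x ^ (e - 1))
          + ⟪(4 * (α + 1)) • (((e - 1) * sf x ^ (e - 1 - 1)) •
              ((c2 * (2 * dualNorm Ψ x.2)) • gradient (dualNorm Ψ) x.2)), x.2⟫ := by
      have hrfl : finslerLapS Ψ (rho α Φ Ψ) x = ∑ i, fderiv ℝ
          (fun τ : Euc k => (Ψ (gradS (rho α Φ Ψ) (x.1, τ)) •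
             gradient Ψ (gradS (rho α Φ Ψ) (x.1, τ))) i) x.2 (EuclideanSpace.single i 1) := rfl
      have hcongr : ∀ i : Fin k, (fun τ : Euc k => (Ψ (gradS (rho α Φ Ψ) (x.1, τ)) •
          gradient Ψ (gradS (rho α Φ Ψ) (x.1, τ))) i)
          = fun τ => (4 * (α + 1) * sf (x.1, τ) ^ (e - 1)) * τ i := by
        intro i
        funext τ
        have hne : ((x.1, τ) : Euc m × Euc k) ≠ 0 := by
          intro hcon
          exact hz0 (congrArg Prod.fst hcon)
        rw [hW (x.1, τ) hne, PiLp.smul_apply, smul_eq_mul]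
      rw [hrfl, Finset.sum_congr rfl (fun i _ => by rw [hcongr i])]
      exact div_smul_id hu2g
    have hGu2 : ⟪(4 * (α + 1)) • (((e - 1) * sf x ^ (e - 1 - 1)) •
              ((c2 * (2 * dualNorm Ψ x.2)) • gradient (dualNorm Ψ) x.2)), x.2⟫
        = 4 * (α + 1) * ((e - 1) * sf x ^ (e - 1 - 1))
            * (c2 * (2 * (dualNorm Ψ x.2 * dualNorm Ψ x.2))) := by
      rcases eq_or_ne x.2 0 with h2 | h2
      · rw [h2]
        simp [dualNorm_zero hΨ hk']
      · obtain ⟨η, hmaxη, -⟩ := exists_isDualMax hΨ hk' x.2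
        have hh : HasGradientAt (dualNorm Ψ) η x.2 := hasGradientAt_dualNorm hΨ hk' h2 hmaxη
        rw [hh.gradient]
        simp only [real_inner_smul_left]
        rw [show ⟪η, x.2⟫ = dualNorm Ψ x.2 from by rw [real_inner_comm]; exact hmaxη.2.symm]
        ring
    -- assemble
    have hlop : Lop2 α Φ Ψ (rho α Φ Ψ) x = finslerLapZ Φ (rho α Φ Ψ) x
        + dualNorm Φ x.1 ^ (2 * α) / 4 * finslerLapS Ψ (rho α Φ Ψ) x := rfl
    rw [hlop, hlapZval, hGu1, hlapSval, hGu2, hrho x,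
      show (2 * α : ℝ) = p - 2 from by rw [hpdef]; ring]
    -- rpow bookkeeping
    have hg21 : dualNorm Φ x.1 ^ (p - 2 - 1) * dualNorm Φ x.1 = dualNorm Φ x.1 ^ (p - 2) := by
      rw [← Real.rpow_add_one (ne_of_gt hG) (p - 2 - 1)]
      norm_num
    have hg22 : dualNorm Φ x.1 ^ (p - 1) * dualNorm Φ x.1 = dualNorm Φ x.1 ^ p := by
      rw [← Real.rpow_add_one (ne_of_gt hG) (p - 1)]
      norm_num
    have hS21 : sf x ^ (e - 1 - 1) * sf x = sf x ^ (e - 1) := by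
      rw [← Real.rpow_add_one (ne_of_gt hS) (e - 1 - 1)]
      norm_num
    have hrhsval : (Q - 1) / sf x ^ e * (dualNorm Φ x.1 / sf x ^ e) ^ (p - 2)
        = (Q - 1) * (sf x ^ (e - 1) * dualNorm Φ x.1 ^ (p - 2)) := by
      have hSe : (0:ℝ) < sf x ^ e := Real.rpow_pos_of_pos hS e
      rw [Real.div_rpow (le_of_lt hG) (le_of_lt hSe),
        ← Real.rpow_mul (le_of_lt hS), div_mul_div_comm, ← Real.rpow_add hS,
        show e + e * (p - 2) = e * p - e from by ring, hep1,
        div_eq_iff (ne_of_gt (Real.rpow_pos_of_pos hS (1 - e)))]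
      have hone : sf x ^ (e - 1) * sf x ^ (1 - e) = 1 := by
        rw [← Real.rpow_add hS]
        norm_num
      rw [show (Q - 1) * (sf x ^ (e - 1) * dualNorm Φ x.1 ^ (p - 2)) * sf x ^ (1 - e)
          = (Q - 1) * dualNorm Φ x.1 ^ (p - 2) * (sf x ^ (e - 1) * sf x ^ (1 - e)) from by ring,
        hone, mul_one]
    rw [hrhsval]
    linear_combination ((p - 2) * sf x ^ (e - 1)) * hg21
      + ((e - 1) * p * sf x ^ (e - 1 - 1) * dualNorm Φ x.1 ^ (p - 2)) * hg22
      + (-((e - 1) * sf x ^ (e - 1 - 1) * dualNorm Φ x.1 ^ (p - 2) * c2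
          * dualNorm Ψ x.2 ^ 2)) * hpdef
      + ((e - 1) * p * sf x ^ (e - 1 - 1) * dualNorm Φ x.1 ^ (p - 2)) * hsz
      + ((e - 1) * p * dualNorm Φ x.1 ^ (p - 2)) * hS21
      + (sf x ^ (e - 1) * dualNorm Φ x.1 ^ (p - 2)) * hep1
      - (sf x ^ (e - 1) * dualNorm Φ x.1 ^ (p - 2)) * hQ
end
end

section
/- Let α > 0 and p > 1 with p ≠ Q, where Q = m + (α+1)k. Then the function u(z,σ) = ρ(z,σ)^{−(Q−p)/(p−1)} satisfies 𝓛_{α,p}(u) = 0 at every point of ℝ^N ∖ {(0,0)}. -/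
open Real MeasureTheory
open scoped RealInnerProductSpace

noncomputable section

variable {m k : ℕ}

namespace MinkAux

variable {n : ℕ} {N : Euc n → ℝ}

theorem zero_eq (hN : IsMinkowskiNorm N) : N 0 = 0 := by
  have h := hN.2.1 0 0
  simpa using h

theorem neg_eq (hN : IsMinkowskiNorm N) (x : Euc n) : N (-x) = N x := by
  have h := hN.2.1 (-1) x
  simpa using h

theorem pos (hN : IsMinkowskiNorm N) {x : Euc n} (hx : x ≠ 0) : 0 < N x := by
  rcases lt_or_eq_of_le (hN.1 x) with h | h
  · exact h
  exfalso
  have hxx : x ≠ -x := by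
    intro h'
    apply hx
    have : (2 : ℝ) • x = 0 := by
      rw [two_smul]; nth_rewrite 2 [h']; simp
    simpa using (smul_eq_zero.1 this).resolve_left (by norm_num)
  have hs := hN.2.2.2.2 (Set.mem_univ x) (Set.mem_univ (-x)) hxx
    (by norm_num : (0:ℝ) < 1/2) (by norm_num : (0:ℝ) < 1/2) (by norm_num)
  rw [show (1/2 : ℝ) • x + (1/2 : ℝ) • (-x) = 0 by simp] at hs
  simp only [smul_eq_mul, zero_eq hN, neg_eq hN, ← h] at hs
  norm_num at hs

theorem contDiffAt (hN : IsMinkowskiNorm N) {x : Euc n} (hx : x ≠ 0) :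
    ContDiffAt ℝ 2 N x := by
  have h2 : ContDiffAt ℝ 2 (fun y => (N y) ^ 2) x :=
    hN.2.2.1.contDiffAt ((isOpen_compl_singleton).mem_nhds (by simpa using hx))
  have hsq : ContDiffAt ℝ 2 (fun y => Real.sqrt ((N y) ^ 2)) x :=
    h2.sqrt (by have := pos hN hx; positivity)
  have : (fun y => Real.sqrt ((N y) ^ 2)) = N := by
    funext y; exact Real.sqrt_sq (hN.1 y)
  rwa [this] at hsq

theorem exists_bounds (hN : IsMinkowskiNorm N) (hn : 1 ≤ n) :
    ∃ c C : ℝ, 0 < c ∧ 0 < C ∧ ∀ x, c * ‖x‖ ≤ N x ∧ N x ≤ C * ‖x‖ := by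
  have hne : (Metric.sphere (0 : Euc n) 1).Nonempty := by
    refine ⟨EuclideanSpace.single ⟨0, hn⟩ 1, ?_⟩
    simp [EuclideanSpace.norm_single]
  have hcomp : IsCompact (Metric.sphere (0 : Euc n) 1) := isCompact_sphere 0 1
  have hcont : ContinuousOn N (Metric.sphere (0 : Euc n) 1) := by
    intro y hy
    have hy0 : y ≠ 0 := by
      intro h; rw [h] at hy; simp at hy
    exact ((contDiffAt hN hy0).continuousAt).continuousWithinAt
  obtain ⟨a, ha, hamin⟩ := hcomp.exists_isMinOn hne hcont
  obtain ⟨b, hb, hbmax⟩ := hcomp.exists_isMaxOn hne hcont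
  have ha0 : a ≠ 0 := by intro h; rw [h] at ha; simp at ha
  have hb0 : b ≠ 0 := by intro h; rw [h] at hb; simp at hb
  refine ⟨N a, N b, pos hN ha0, pos hN hb0, fun x => ?_⟩
  rcases eq_or_ne x 0 with rfl | hx0
  · simp [zero_eq hN]
  have hxn : ‖x‖ ≠ 0 := norm_ne_zero_iff.2 hx0
  set u : Euc n := ‖x‖⁻¹ • x with hu
  have hus : u ∈ Metric.sphere (0 : Euc n) 1 := by
    simp [hu, norm_smul, abs_of_nonneg (inv_nonneg.2 (norm_nonneg x)),
      inv_mul_cancel₀ hxn]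
  have hNx : N x = ‖x‖ * N u := by
    have : N u = |‖x‖⁻¹| * N x := hN.2.1 _ _
    rw [this, abs_of_nonneg (inv_nonneg.2 (norm_nonneg x))]
    field_simp
  constructor
  · rw [hNx, mul_comm (N a)]
    exact mul_le_mul_of_nonneg_left (hamin hus) (norm_nonneg x)
  · rw [hNx, mul_comm (N b)]
    exact mul_le_mul_of_nonneg_left (hbmax hus) (norm_nonneg x)

theorem continuous (hN : IsMinkowskiNorm N) (hn : 1 ≤ n) : Continuous N := by
  obtain ⟨c, C, hc, hC, hb⟩ := exists_bounds hN hn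
  rw [continuous_iff_continuousAt]
  intro x
  rcases eq_or_ne x 0 with rfl | hx
  · rw [ContinuousAt, zero_eq hN]
    have : Filter.Tendsto (fun y : Euc n => C * ‖y‖) (nhds 0) (nhds 0) := by
      simpa using (continuous_norm.tendsto (0 : Euc n)).const_mul C
    apply squeeze_zero (fun y => hN.1 y) (fun y => (hb y).2)
    simpa using this
  · exact (contDiffAt hN hx).continuousAt

theorem isCompact_sphere (hN : IsMinkowskiNorm N) (hn : 1 ≤ n) :
    IsCompact {ξ : Euc n | N ξ = 1} := by
  obtain ⟨c, C, hc, hC, hb⟩ := exists_bounds hN hn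
  have hclosed : IsClosed {ξ : Euc n | N ξ = 1} :=
    isClosed_eq (continuous hN hn) continuous_const
  have hbdd : Bornology.IsBounded {ξ : Euc n | N ξ = 1} := by
    apply Bornology.IsBounded.subset (Metric.isBounded_closedBall (x := (0:Euc n)) (r := c⁻¹))
    intro ξ hξ
    simp only [Set.mem_setOf_eq] at hξ
    have := (hb ξ).1
    rw [hξ] at this
    have : ‖ξ‖ ≤ c⁻¹ := by
      rw [← one_div]
      rw [le_div_iff₀ hc]
      linarith
    simpa [Metric.mem_closedBall] using this
  exact Metric.isCompact_of_isClosed_isBounded hclosed hbdd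

theorem sphere_nonempty (hN : IsMinkowskiNorm N) (hn : 1 ≤ n) :
    {ξ : Euc n | N ξ = 1}.Nonempty := by
  have hx0 : (EuclideanSpace.single (⟨0, hn⟩ : Fin n) (1:ℝ)) ≠ 0 := by
    intro h
    have := congrArg (fun v : Euc n => v ⟨0, hn⟩) h
    simp at this
  refine ⟨(N (EuclideanSpace.single ⟨0, hn⟩ 1))⁻¹ • EuclideanSpace.single ⟨0, hn⟩ 1, ?_⟩
  have hp := pos hN hx0
  simp only [Set.mem_setOf_eq, hN.2.1]
  rw [abs_of_nonneg (inv_nonneg.2 hp.le)]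
  field_simp

open Classical in
/-- The maximizer of `⟪z, ·⟫` on the unit sphere of `N`. -/
def xiN (N : Euc n → ℝ) (z : Euc n) : Euc n :=
  if h : ∃ ξ, N ξ = 1 ∧ ∀ η, N η = 1 → ⟪z, η⟫ ≤ ⟪z, ξ⟫ then h.choose else 0

theorem xiN_spec (hN : IsMinkowskiNorm N) (hn : 1 ≤ n) (z : Euc n) :
    N (xiN N z) = 1 ∧ ∀ η, N η = 1 → ⟪z, η⟫ ≤ ⟪z, xiN N z⟫ := by
  have hex : ∃ ξ, N ξ = 1 ∧ ∀ η, N η = 1 → ⟪z, η⟫ ≤ ⟪z, ξ⟫ := by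
    have hic : Continuous fun η : Euc n => ⟪z, η⟫ := continuous_const.inner continuous_id
    obtain ⟨ξ, hξ, hmax⟩ := (isCompact_sphere hN hn).exists_isMaxOn (sphere_nonempty hN hn)
      hic.continuousOn
    exact ⟨ξ, hξ, fun η hη => hmax hη⟩
  rw [xiN]
  rw [dif_pos hex]
  exact hex.choose_spec

theorem xiN_norm (hN : IsMinkowskiNorm N) (hn : 1 ≤ n) (z : Euc n) : N (xiN N z) = 1 :=
  (xiN_spec hN hn z).1

theorem xiN_ne_zero (hN : IsMinkowskiNorm N) (hn : 1 ≤ n) (z : Euc n) : xiN N z ≠ 0 := by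
  intro h
  have := xiN_norm hN hn z
  rw [h, zero_eq hN] at this
  norm_num at this

theorem dual_eq (hN : IsMinkowskiNorm N) (hn : 1 ≤ n) (z : Euc n) :
    dualNorm N z = ⟪z, xiN N z⟫ := by
  apply IsGreatest.csSup_eq
  constructor
  · exact ⟨xiN N z, xiN_norm hN hn z, rfl⟩
  · rintro _ ⟨η, hη, rfl⟩
    exact (xiN_spec hN hn z).2 η hη

theorem inner_le_dual (hN : IsMinkowskiNorm N) (hn : 1 ≤ n) {η z : Euc n} (hη : N η = 1) :
    ⟪z, η⟫ ≤ dualNorm N z := by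
  rw [dual_eq hN hn]
  exact (xiN_spec hN hn z).2 η hη

theorem dual_pos (hN : IsMinkowskiNorm N) (hn : 1 ≤ n) {z : Euc n} (hz : z ≠ 0) :
    0 < dualNorm N z := by
  have hNz := pos hN hz
  have hη : N ((N z)⁻¹ • z) = 1 := by
    rw [hN.2.1, abs_of_nonneg (inv_nonneg.2 hNz.le)]
    field_simp
  calc (0:ℝ) < ⟪z, (N z)⁻¹ • z⟫ := by
        rw [real_inner_smul_right, real_inner_self_eq_norm_sq]
        have : (0:ℝ) < ‖z‖ := norm_pos_iff.2 hz
        positivity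
    _ ≤ dualNorm N z := inner_le_dual hN hn hη

theorem dual_zero (hN : IsMinkowskiNorm N) (hn : 1 ≤ n) : dualNorm N (0 : Euc n) = 0 := by
  rw [dual_eq hN hn]
  simp

theorem dual_nonneg (hN : IsMinkowskiNorm N) (hn : 1 ≤ n) (z : Euc n) : 0 ≤ dualNorm N z := by
  rcases eq_or_ne z 0 with rfl | hz
  · rw [dual_zero hN hn]
  · exact (dual_pos hN hn hz).le

theorem dual_le (hN : IsMinkowskiNorm N) (hn : 1 ≤ n) :
    ∃ C : ℝ, 0 < C ∧ ∀ z : Euc n, dualNorm N z ≤ C * ‖z‖ := by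
  obtain ⟨c, C, hc, hC, hb⟩ := exists_bounds hN hn
  refine ⟨c⁻¹, by positivity, fun z => ?_⟩
  rw [dual_eq hN hn]
  calc ⟪z, xiN N z⟫ ≤ ‖z‖ * ‖xiN N z‖ := real_inner_le_norm _ _
    _ ≤ ‖z‖ * c⁻¹ := by
        apply mul_le_mul_of_nonneg_left _ (norm_nonneg z)
        have h1 := (hb (xiN N z)).1
        rw [xiN_norm hN hn z] at h1
        rw [← one_div, le_div_iff₀ hc]
        linarith
    _ = c⁻¹ * ‖z‖ := mul_comm _ _

theorem maximizer_unique (hN : IsMinkowskiNorm N) (hn : 1 ≤ n) {z : Euc n} (hz : z ≠ 0)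
    {η : Euc n} (hη : N η = 1) (hmax : ∀ η', N η' = 1 → ⟪z, η'⟫ ≤ ⟪z, η⟫) :
    η = xiN N z := by
  by_contra hne
  set ξ := xiN N z with hξ
  have hξs := xiN_spec hN hn z
  have hM : ⟪z, η⟫ = ⟪z, ξ⟫ := le_antisymm (hξs.2 η hη) (hmax ξ hξs.1)
  have hMpos : 0 < ⟪z, ξ⟫ := by
    rw [← dual_eq hN hn]
    exact dual_pos hN hn hz
  set mid : Euc n := (1/2 : ℝ) • η + (1/2 : ℝ) • ξ with hmid
  have hNmid : (N mid) ^ 2 < 1 := by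
    have := hN.2.2.2.2 (Set.mem_univ η) (Set.mem_univ ξ) hne
      (by norm_num : (0:ℝ) < 1/2) (by norm_num : (0:ℝ) < 1/2) (by norm_num)
    simp only [smul_eq_mul, hη, hξs.1] at this
    calc (N mid)^2 < 1/2 * 1^2 + 1/2 * 1^2 := by rw [show N ξ = 1 from hξs.1] at this; exact this
      _ = 1 := by norm_num
  have hinner_mid : ⟪z, mid⟫ = ⟪z, ξ⟫ := by
    rw [hmid, inner_add_right, real_inner_smul_right, real_inner_smul_right, hM]
    ring
  have hmid0 : mid ≠ 0 := by
    intro h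
    rw [h, inner_zero_right] at hinner_mid
    linarith
  have hNmidpos := pos hN hmid0
  have hNmid1 : N mid < 1 := by nlinarith
  have hη3 : N ((N mid)⁻¹ • mid) = 1 := by
    rw [hN.2.1, abs_of_nonneg (inv_nonneg.2 hNmidpos.le)]
    field_simp
  have hcontr := hξs.2 _ hη3
  rw [real_inner_smul_right, hinner_mid] at hcontr
  have : (1:ℝ) < (N mid)⁻¹ := by
    rw [lt_inv_comm₀] <;> simp [hNmidpos, hNmid1]
  nlinarith

theorem xiN_continuousAt (hN : IsMinkowskiNorm N) (hn : 1 ≤ n) {z₀ : Euc n} (hz : z₀ ≠ 0) :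
    ContinuousAt (xiN N) z₀ := by
  rw [ContinuousAt]
  apply Filter.tendsto_iff_seq_tendsto.2
  intro u hu
  apply Filter.tendsto_of_subseq_tendsto
  intro ns hns
  have hmem : ∀ j, xiN N (u (ns j)) ∈ {ξ : Euc n | N ξ = 1} := fun j => xiN_norm hN hn _
  obtain ⟨a, ha, φ, hφ, haconv⟩ := (isCompact_sphere hN hn).tendsto_subseq hmem
  refine ⟨φ, ?_⟩
  have hu' : Filter.Tendsto (fun j => u (ns (φ j))) Filter.atTop (nhds z₀) :=
    hu.comp (hns.comp hφ.tendsto_atTop)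
  have ha_eq : a = xiN N z₀ := by
    apply maximizer_unique hN hn hz ha
    intro η hη
    have hle : ∀ j, ⟪u (ns (φ j)), η⟫ ≤ ⟪u (ns (φ j)), xiN N (u (ns (φ j)))⟫ :=
      fun j => (xiN_spec hN hn _).2 η hη
    have h1 : Filter.Tendsto (fun j => ⟪u (ns (φ j)), η⟫) Filter.atTop (nhds ⟪z₀, η⟫) :=
      hu'.inner tendsto_const_nhds
    have h2 : Filter.Tendsto (fun j => ⟪u (ns (φ j)), xiN N (u (ns (φ j)))⟫)
        Filter.atTop (nhds ⟪z₀, a⟫) := hu'.inner haconv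
    exact le_of_tendsto_of_tendsto' h1 h2 hle
  rw [← ha_eq]
  exact haconv

theorem hasGradientAt_dualNorm (hN : IsMinkowskiNorm N) (hn : 1 ≤ n) {z₀ : Euc n}
    (hz : z₀ ≠ 0) : HasGradientAt (dualNorm N) (xiN N z₀) z₀ := by
  rw [hasGradientAt_iff_isLittleO]
  rw [Asymptotics.isLittleO_iff]
  intro c hc
  have hcont := xiN_continuousAt hN hn hz
  have hev : ∀ᶠ z in nhds z₀, ‖xiN N z - xiN N z₀‖ < c := by
    have : Filter.Tendsto (fun z => ‖xiN N z - xiN N z₀‖) (nhds z₀) (nhds 0) := by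
      have h0 : Filter.Tendsto (fun z => xiN N z - xiN N z₀) (nhds z₀) (nhds 0) := by
        simpa using hcont.tendsto.sub (tendsto_const_nhds (x := xiN N z₀))
      simpa using h0.norm
    exact this.eventually_lt_const hc
  filter_upwards [hev] with z hz
  have hlow : 0 ≤ dualNorm N z - dualNorm N z₀ - ⟪xiN N z₀, z - z₀⟫ := by
    have h1 : ⟪z, xiN N z₀⟫ ≤ dualNorm N z := inner_le_dual hN hn (xiN_norm hN hn z₀)
    have h2 : dualNorm N z₀ = ⟪z₀, xiN N z₀⟫ := dual_eq hN hn z₀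
    have h3 : ⟪xiN N z₀, z - z₀⟫ = ⟪z, xiN N z₀⟫ - ⟪z₀, xiN N z₀⟫ := by
      rw [real_inner_comm, inner_sub_left]
    linarith
  have hup : dualNorm N z - dualNorm N z₀ - ⟪xiN N z₀, z - z₀⟫
      ≤ ‖z - z₀‖ * ‖xiN N z - xiN N z₀‖ := by
    have h1 : dualNorm N z = ⟪z, xiN N z⟫ := dual_eq hN hn z
    have h2 : ⟪z₀, xiN N z⟫ ≤ dualNorm N z₀ := inner_le_dual hN hn (xiN_norm hN hn z)
    have h3 : ⟪z - z₀, xiN N z - xiN N z₀⟫ ≤ ‖z - z₀‖ * ‖xiN N z - xiN N z₀‖ :=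
      real_inner_le_norm _ _
    have h4 : ⟪z - z₀, xiN N z - xiN N z₀⟫
        = ⟪z, xiN N z⟫ - ⟪z₀, xiN N z⟫ - (⟪z, xiN N z₀⟫ - ⟪z₀, xiN N z₀⟫) := by
      rw [inner_sub_left, inner_sub_right, inner_sub_right]; ring
    have h5 : ⟪xiN N z₀, z - z₀⟫ = ⟪z, xiN N z₀⟫ - ⟪z₀, xiN N z₀⟫ := by
      rw [real_inner_comm, inner_sub_left]
    linarith
  rw [Real.norm_eq_abs, abs_of_nonneg hlow]
  calc dualNorm N z - dualNorm N z₀ - ⟪xiN N z₀, z - z₀⟫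
      ≤ ‖z - z₀‖ * ‖xiN N z - xiN N z₀‖ := hup
    _ ≤ ‖z - z₀‖ * c := mul_le_mul_of_nonneg_left hz.le (norm_nonneg _)
    _ = c * ‖z - z₀‖ := mul_comm _ _

theorem fderiv_self_apply (hN : IsMinkowskiNorm N) {v : Euc n} (hv : v ≠ 0) :
    fderiv ℝ N v v = N v := by
  have hdiff : DifferentiableAt ℝ N v := (contDiffAt hN hv).differentiableAt (by norm_num)
  have hsmul : HasDerivAt (fun t : ℝ => t • v) v 1 := by
    simpa using (hasDerivAt_id (1 : ℝ)).smul_const v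
  have h1 : HasDerivAt (fun t : ℝ => N (t • v)) (fderiv ℝ N v v) 1 := by
    have hg : HasFDerivAt N (fderiv ℝ N v) ((fun t : ℝ => t • v) 1) := by
      simpa using hdiff.hasFDerivAt
    exact hg.comp_hasDerivAt 1 hsmul
  have h2 : HasDerivAt (fun t : ℝ => N (t • v)) (N v) 1 := by
    have hmul : HasDerivAt (fun t : ℝ => t * N v) (N v) 1 := by
      simpa using (hasDerivAt_id (1 : ℝ)).mul_const (N v)
    apply hmul.congr_of_eventuallyEq
    filter_upwards [eventually_gt_nhds (by norm_num : (0:ℝ) < 1)] with t ht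
    rw [hN.2.1, abs_of_pos ht]
  exact h1.unique h2

theorem hasGradientAt_N_xi (hN : IsMinkowskiNorm N) (hn : 1 ≤ n) {z : Euc n} (hz : z ≠ 0) :
    HasGradientAt N ((dualNorm N z)⁻¹ • z) (xiN N z) := by
  set ξ := xiN N z with hξdef
  have hξ0 : ξ ≠ 0 := xiN_ne_zero hN hn z
  have hM : 0 < dualNorm N z := dual_pos hN hn hz
  have hdiff : DifferentiableAt ℝ N ξ := (contDiffAt hN hξ0).differentiableAt (by norm_num)
  have hstrict : HasStrictFDerivAt N (fderiv ℝ N ξ) ξ :=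
    (contDiffAt hN hξ0).hasStrictFDerivAt (by norm_num)
  have hφstrict : HasStrictFDerivAt (fun v : Euc n => ⟪z, v⟫) (innerSL ℝ z) ξ :=
    (innerSL ℝ z).hasStrictFDerivAt
  have hmax : IsMaxOn (fun v : Euc n => ⟪z, v⟫) {x | N x = N ξ} ξ := by
    intro η hη
    have hη1 : N η = 1 := by
      have := hη
      simp only [Set.mem_setOf_eq] at this
      rw [this, xiN_norm hN hn z]
    exact (xiN_spec hN hn z).2 η hη1
  have hextr : IsLocalExtrOn (fun v : Euc n => ⟪z, v⟫) {x | N x = N ξ} ξ :=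
    Or.inr hmax.localize
  obtain ⟨a, b, hab, heq⟩ := hextr.exists_multipliers_of_hasStrictFDerivAt_1d hstrict hφstrict
  have heval : ∀ w, a * fderiv ℝ N ξ w + b * ⟪z, w⟫ = 0 := by
    intro w
    have := ContinuousLinearMap.ext_iff.1 heq w
    simpa [ContinuousLinearMap.add_apply, ContinuousLinearMap.smul_apply, innerSL_apply_apply] using this
  have hξeval := heval ξ
  rw [fderiv_self_apply hN hξ0, xiN_norm hN hn z, hξdef, ← dual_eq hN hn z] at hξeval
  have hb : b ≠ 0 := by
    intro hb0
    rw [hb0] at hξeval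
    simp at hξeval
    exact hab (by simp [hξeval, hb0, Prod.ext_iff])
  have ha : a = -(b * dualNorm N z) := by linarith
  have ha0 : a ≠ 0 := by
    rw [ha]
    exact neg_ne_zero.2 (mul_ne_zero hb (ne_of_gt hM))
  rw [hasGradientAt_iff_hasFDerivAt]
  have hDeq : fderiv ℝ N ξ = InnerProductSpace.toDual ℝ (Euc n) ((dualNorm N z)⁻¹ • z) := by
    ext w
    have h1 := heval w
    have h2 : InnerProductSpace.toDual ℝ (Euc n) ((dualNorm N z)⁻¹ • z) w
        = (dualNorm N z)⁻¹ * ⟪z, w⟫ := by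
      rw [InnerProductSpace.toDual_apply_apply, real_inner_smul_left]
    rw [h2]
    have : fderiv ℝ N ξ w = -(b / a) * ⟪z, w⟫ := by
      field_simp at h1 ⊢
      linarith
    rw [this, ha]
    field_simp
  rw [← hDeq]
  exact hdiff.hasFDerivAt

theorem inner_gradient (f : Euc n → ℝ) (x w : Euc n) :
    ⟪gradient f x, w⟫ = fderiv ℝ f x w := by
  rw [gradient]
  exact InnerProductSpace.toDual_symm_apply

theorem weighted_grad_smul (hN : IsMinkowskiNorm N) {v : Euc n} (hv : v ≠ 0) (l : ℝ) :
    N (l • v) • gradient N (l • v) = l • (N v • gradient N v) := by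
  rcases eq_or_ne l 0 with rfl | hl
  · rw [zero_smul, zero_smul]
    rw [show N (0 : Euc n) = 0 from zero_eq hN]
    rw [zero_smul]
  have hlv : l • v ≠ 0 := smul_ne_zero hl hv
  have hdv : DifferentiableAt ℝ N v := (contDiffAt hN hv).differentiableAt (by norm_num)
  have hdlv : DifferentiableAt ℝ N (l • v) := (contDiffAt hN hlv).differentiableAt (by norm_num)
  have hsm : HasFDerivAt (fun x : Euc n => l • x) (l • ContinuousLinearMap.id ℝ (Euc n)) v :=
    (l • ContinuousLinearMap.id ℝ (Euc n)).hasFDerivAt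
  have hcomp : HasFDerivAt (fun x : Euc n => N (l • x))
      ((fderiv ℝ N (l • v)).comp (l • ContinuousLinearMap.id ℝ (Euc n))) v :=
    HasFDerivAt.comp v (by exact hdlv.hasFDerivAt) hsm
  have hconst : HasFDerivAt (fun x : Euc n => N (l • x)) (|l| • fderiv ℝ N v) v := by
    have hfun : (fun x : Euc n => N (l • x)) = fun x => |l| * N x := funext fun x => hN.2.1 l x
    rw [hfun]
    exact hdv.hasFDerivAt.const_mul |l|
  have hDeq := hcomp.unique hconst
  have hw : ∀ w, fderiv ℝ N (l • v) w = (|l| / l) * fderiv ℝ N v w := by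
    intro w
    have h1 := ContinuousLinearMap.ext_iff.1 hDeq w
    simp only [ContinuousLinearMap.comp_apply, ContinuousLinearMap.smul_apply,
      ContinuousLinearMap.id_apply, smul_eq_mul] at h1
    have h2 : fderiv ℝ N (l • v) (l • w) = l * fderiv ℝ N (l • v) w := by
      rw [ContinuousLinearMap.map_smul]; simp
    rw [h2] at h1
    field_simp
    linarith
  have hgrad : gradient N (l • v) = (|l| / l) • gradient N v := by
    apply ext_inner_right ℝ
    intro w
    rw [inner_gradient, real_inner_smul_left, inner_gradient, hw w]
  rw [hgrad, hN.2.1]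
  rw [smul_smul, smul_smul]
  congr 1
  have h3 : |l| * N v * (|l| / l) = (|l| * |l|) * N v / l := by ring
  rw [h3, abs_mul_abs_self]
  field_simp

-- gradient combinators

theorem gradient_scomp {f : Euc n → ℝ} {g : ℝ → ℝ} {f' : Euc n} {g' : ℝ} {x : Euc n}
    (hg : HasDerivAt g g' (f x)) (hf : HasGradientAt f f' x) :
    HasGradientAt (fun y => g (f y)) (g' • f') x := by
  rw [hasGradientAt_iff_hasFDerivAt] at hf ⊢
  have hcomp := hg.comp_hasFDerivAt x hf
  rw [_root_.map_smul]
  exact hcomp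

theorem gradient_add_const {f : Euc n → ℝ} {f' : Euc n} {x : Euc n}
    (hf : HasGradientAt f f' x) (c : ℝ) :
    HasGradientAt (fun y => f y + c) f' x := by
  rw [hasGradientAt_iff_hasFDerivAt] at hf ⊢
  exact hf.add_const c

theorem gradient_const_add {f : Euc n → ℝ} {f' : Euc n} {x : Euc n}
    (hf : HasGradientAt f f' x) (c : ℝ) :
    HasGradientAt (fun y => c + f y) f' x := by
  rw [hasGradientAt_iff_hasFDerivAt] at hf ⊢
  exact hf.const_add c

theorem gradient_const_mul {f : Euc n → ℝ} {f' : Euc n} {x : Euc n}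
    (hf : HasGradientAt f f' x) (c : ℝ) :
    HasGradientAt (fun y => c * f y) (c • f') x := by
  rw [hasGradientAt_iff_hasFDerivAt] at hf ⊢
  have := hf.const_mul c
  rw [_root_.map_smul]
  exact this

theorem gradient_mul {f g : Euc n → ℝ} {f' g' : Euc n} {x : Euc n}
    (hf : HasGradientAt f f' x) (hg : HasGradientAt g g' x) :
    HasGradientAt (fun y => f y * g y) (f x • g' + g x • f') x := by
  rw [hasGradientAt_iff_hasFDerivAt] at hf hg ⊢
  have := hf.mul hg
  rw [_root_.map_add, _root_.map_smul, _root_.map_smul]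
  exact this

/-- Gradient of `z ↦ (N⁰ z)^r` for `r > 1`, valid at every point. -/
theorem hasGradientAt_dual_rpow (hN : IsMinkowskiNorm N) (hn : 1 ≤ n) {r : ℝ} (hr : 1 < r)
    (z : Euc n) :
    HasGradientAt (fun y => dualNorm N y ^ r)
      ((r * dualNorm N z ^ (r - 1)) • xiN N z) z := by
  rcases eq_or_ne z 0 with rfl | hz
  · -- at zero: gradient is zero
    have hcoef : r * dualNorm N (0 : Euc n) ^ (r - 1) = 0 := by
      rw [dual_zero hN hn, Real.zero_rpow (by linarith : r - 1 ≠ 0), mul_zero]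
    rw [hcoef, zero_smul]
    rw [hasGradientAt_iff_isLittleO]
    obtain ⟨C, hC, hCle⟩ := dual_le hN hn
    rw [Asymptotics.isLittleO_iff]
    intro c hc
    have htend : Filter.Tendsto (fun y : Euc n => C ^ r * ‖y‖ ^ (r - 1)) (nhds 0) (nhds 0) := by
      have h1 : Filter.Tendsto (fun y : Euc n => ‖y‖) (nhds 0) (nhds 0) := by
        simpa using (continuous_norm (E := Euc n)).tendsto 0
      have h2 : Filter.Tendsto (fun t : ℝ => C ^ r * t ^ (r - 1)) (nhds 0) (nhds 0) := by
        have h3 : Filter.Tendsto (fun t : ℝ => t ^ (r - 1)) (nhds 0) (nhds 0) := by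
          have := (Real.continuousAt_rpow_const 0 (r - 1) (Or.inr (by linarith))).tendsto
          simpa [Real.zero_rpow (by linarith : r - 1 ≠ 0)] using this
        simpa using h3.const_mul (C ^ r)
      exact h2.comp h1
    filter_upwards [htend.eventually_le_const hc] with y hy
    have h0 : (0 : ℝ) ≤ dualNorm N y := dual_nonneg hN hn y
    have key : dualNorm N y ^ r ≤ (C ^ r * ‖y‖ ^ (r - 1)) * ‖y‖ := by
      rcases eq_or_ne y 0 with rfl | hy0
      · simp [dual_zero hN hn, Real.zero_rpow (by linarith : r ≠ 0)]
      · have hyn : (0:ℝ) < ‖y‖ := norm_pos_iff.2 hy0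
        calc dualNorm N y ^ r ≤ (C * ‖y‖) ^ r :=
              Real.rpow_le_rpow h0 (hCle y) (by linarith)
          _ = C ^ r * ‖y‖ ^ r := Real.mul_rpow hC.le (norm_nonneg y)
          _ = C ^ r * (‖y‖ ^ (r - 1) * ‖y‖ ^ (1:ℝ)) := by
              rw [← Real.rpow_add hyn]; norm_num
          _ = (C ^ r * ‖y‖ ^ (r - 1)) * ‖y‖ := by rw [Real.rpow_one]; ring
    have h00 : dualNorm N (0 : Euc n) ^ r = 0 := by
      rw [dual_zero hN hn, Real.zero_rpow (by linarith : r ≠ 0)]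
    simp only [h00, inner_zero_left, sub_zero, Real.norm_eq_abs]
    rw [abs_of_nonneg (Real.rpow_nonneg h0 r)]
    calc dualNorm N y ^ r ≤ (C ^ r * ‖y‖ ^ (r - 1)) * ‖y‖ := key
      _ ≤ c * ‖y‖ := mul_le_mul_of_nonneg_right hy (norm_nonneg y)
  · have hM := dual_pos hN hn hz
    have houter : HasDerivAt (fun t : ℝ => t ^ r) (r * dualNorm N z ^ (r - 1)) (dualNorm N z) :=
      Real.hasDerivAt_rpow_const (Or.inl (ne_of_gt hM))
    exact gradient_scomp houter (hasGradientAt_dualNorm hN hn hz)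

/-- Gradient of `σ ↦ (N⁰ σ)^2`, valid at every point. -/
theorem hasGradientAt_dual_sq (hN : IsMinkowskiNorm N) (hn : 1 ≤ n) (σ : Euc n) :
    HasGradientAt (fun y => dualNorm N y ^ 2) ((2 * dualNorm N σ) • xiN N σ) σ := by
  rcases eq_or_ne σ 0 with rfl | hσ
  · have hcoef : 2 * dualNorm N (0 : Euc n) = 0 := by rw [dual_zero hN hn, mul_zero]
    rw [hcoef, zero_smul]
    rw [hasGradientAt_iff_isLittleO]
    obtain ⟨C, hC, hCle⟩ := dual_le hN hn
    rw [Asymptotics.isLittleO_iff]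
    intro c hc
    have htend : Filter.Tendsto (fun y : Euc n => C ^ 2 * ‖y‖) (nhds 0) (nhds 0) := by
      have h1 : Filter.Tendsto (fun y : Euc n => ‖y‖) (nhds 0) (nhds 0) := by
        simpa using (continuous_norm (E := Euc n)).tendsto 0
      simpa using h1.const_mul (C ^ 2)
    filter_upwards [htend.eventually_le_const hc] with y hy
    have h0 : (0 : ℝ) ≤ dualNorm N y := dual_nonneg hN hn y
    have key : dualNorm N y ^ 2 ≤ (C ^ 2 * ‖y‖) * ‖y‖ := by
      have h1 : dualNorm N y ^ 2 ≤ (C * ‖y‖) ^ 2 := by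
        apply sq_le_sq'
        · nlinarith [hCle y, norm_nonneg y]
        · exact hCle y
      calc dualNorm N y ^ 2 ≤ (C * ‖y‖) ^ 2 := h1
        _ = (C ^ 2 * ‖y‖) * ‖y‖ := by ring
    have h00 : dualNorm N (0 : Euc n) ^ 2 = 0 := by rw [dual_zero hN hn]; norm_num
    simp only [h00, inner_zero_left, sub_zero, Real.norm_eq_abs]
    rw [abs_of_nonneg (by positivity : (0:ℝ) ≤ dualNorm N y ^ 2)]
    calc dualNorm N y ^ 2 ≤ (C ^ 2 * ‖y‖) * ‖y‖ := key
      _ ≤ c * ‖y‖ := mul_le_mul_of_nonneg_right hy (norm_nonneg y)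
  · have houter : HasDerivAt (fun t : ℝ => t ^ 2) (2 * dualNorm N σ) (dualNorm N σ) := by
      simpa using hasDerivAt_pow 2 (dualNorm N σ)
    exact gradient_scomp houter (hasGradientAt_dualNorm hN hn hσ)

end MinkAux

namespace GrushinAux

open MinkAux

variable {m k : ℕ} {α p Q e β δ : ℝ} {Φ : Euc m → ℝ} {Ψ : Euc k → ℝ}

/-- The quantity `T(z,σ) = Φ⁰(z)^{2(α+1)} + 4(α+1)²Ψ⁰(σ)²` (so `ρ = T^{1/(2(α+1))}`). -/
def Tg (α : ℝ) (Φ : Euc m → ℝ) (Ψ : Euc k → ℝ) (x : Euc m × Euc k) : ℝ :=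
  dualNorm Φ x.1 ^ (2 * (α + 1)) + 4 * (α + 1) ^ 2 * dualNorm Ψ x.2 ^ 2

theorem Tg_nonneg (hΦ : IsMinkowskiNorm Φ) (hΨ : IsMinkowskiNorm Ψ)
    (hm : 1 ≤ m) (hk : 1 ≤ k) (x : Euc m × Euc k) : 0 ≤ Tg α Φ Ψ x := by
  have h1 : (0:ℝ) ≤ dualNorm Φ x.1 ^ (2 * (α + 1)) := Real.rpow_nonneg (dual_nonneg hΦ hm x.1) _
  have h2 : (0:ℝ) ≤ dualNorm Ψ x.2 ^ 2 := sq_nonneg _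
  have h3 : (0:ℝ) ≤ 4 * (α + 1) ^ 2 := by positivity
  unfold Tg
  nlinarith

theorem Tg_pos (hΦ : IsMinkowskiNorm Φ) (hΨ : IsMinkowskiNorm Ψ)
    (hm : 1 ≤ m) (hk : 1 ≤ k) (hα : 0 < α) {x : Euc m × Euc k} (hx : x ≠ 0) :
    0 < Tg α Φ Ψ x := by
  have h2 : (0:ℝ) ≤ dualNorm Ψ x.2 ^ 2 := sq_nonneg _
  have h3 : (0:ℝ) ≤ 4 * (α + 1) ^ 2 := by positivity
  rcases eq_or_ne x.1 0 with h1 | h1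
  · have hx2 : x.2 ≠ 0 := by
      intro h2'
      exact hx (Prod.ext h1 h2')
    have hd : 0 < dualNorm Ψ x.2 := dual_pos hΨ hk hx2
    have h4 : (0:ℝ) ≤ dualNorm Φ x.1 ^ (2 * (α + 1)) :=
      Real.rpow_nonneg (dual_nonneg hΦ hm x.1) _
    have h5 : 0 < 4 * (α + 1) ^ 2 * dualNorm Ψ x.2 ^ 2 := by positivity
    unfold Tg
    nlinarith
  · have hd : 0 < dualNorm Φ x.1 := dual_pos hΦ hm h1
    have h4 : (0:ℝ) < dualNorm Φ x.1 ^ (2 * (α + 1)) := Real.rpow_pos_of_pos hd _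
    unfold Tg
    nlinarith

theorem rho_pow_eq (hΦ : IsMinkowskiNorm Φ) (hΨ : IsMinkowskiNorm Ψ)
    (hm : 1 ≤ m) (hk : 1 ≤ k) (hα : 0 < α) (hβ : β = e / (2 * (α + 1)))
    (y : Euc m × Euc k) :
    ((dualNorm Φ y.1 ^ (2 * (α + 1)) + 4 * (α + 1) ^ 2 * dualNorm Ψ y.2 ^ 2)
        ^ (1 / (2 * (α + 1)))) ^ e = Tg α Φ Ψ y ^ β := by
  have hT : (0:ℝ) ≤ Tg α Φ Ψ y := Tg_nonneg hΦ hΨ hm hk y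
  have : (Tg α Φ Ψ y ^ (1 / (2 * (α + 1)))) ^ e = Tg α Φ Ψ y ^ (1 / (2 * (α + 1)) * e) :=
    (Real.rpow_mul hT _ _).symm
  rw [show (dualNorm Φ y.1 ^ (2 * (α + 1)) + 4 * (α + 1) ^ 2 * dualNorm Ψ y.2 ^ 2)
      = Tg α Φ Ψ y from rfl, this, hβ]
  congr 1
  have hα1 : α + 1 ≠ 0 := by positivity
  field_simp

def czv (α e β : ℝ) (Φ : Euc m → ℝ) (Ψ : Euc k → ℝ) (y : Euc m × Euc k) : ℝ :=
  e * Tg α Φ Ψ y ^ (β - 1) * dualNorm Φ y.1 ^ (2 * α + 1)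

def csv (α e β : ℝ) (Φ : Euc m → ℝ) (Ψ : Euc k → ℝ) (y : Euc m × Euc k) : ℝ :=
  4 * (α + 1) * e * Tg α Φ Ψ y ^ (β - 1) * dualNorm Ψ y.2

theorem hasGradientAt_sliceZ (hΦ : IsMinkowskiNorm Φ) (hΨ : IsMinkowskiNorm Ψ)
    (hm : 1 ≤ m) (hk : 1 ≤ k) (hα : 0 < α) (hβ : β = e / (2 * (α + 1)))
    {x : Euc m × Euc k} (hT : 0 < Tg α Φ Ψ x) :
    HasGradientAt (fun z => Tg α Φ Ψ (z, x.2) ^ β)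
      (czv α e β Φ Ψ x • xiN Φ x.1) x.1 := by
  have hr : (1:ℝ) < 2 * (α + 1) := by linarith
  have hA := hasGradientAt_dual_rpow hΦ hm hr x.1
  have hAB := gradient_add_const hA (4 * (α + 1) ^ 2 * dualNorm Ψ x.2 ^ 2)
  have houter : HasDerivAt (fun t : ℝ => t ^ β) (β * Tg α Φ Ψ x ^ (β - 1))
      (dualNorm Φ x.1 ^ (2 * (α + 1)) + 4 * (α + 1) ^ 2 * dualNorm Ψ x.2 ^ 2) := by
    have : (dualNorm Φ x.1 ^ (2 * (α + 1)) + 4 * (α + 1) ^ 2 * dualNorm Ψ x.2 ^ 2)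
        = Tg α Φ Ψ x := rfl
    rw [this]
    exact Real.hasDerivAt_rpow_const (Or.inl hT.ne')
  have hres := gradient_scomp houter hAB
  have hsc : (β * Tg α Φ Ψ x ^ (β - 1)) •
        ((2 * (α + 1) * dualNorm Φ x.1 ^ (2 * (α + 1) - 1)) • xiN Φ x.1)
      = czv α e β Φ Ψ x • xiN Φ x.1 := by
    rw [smul_smul]
    congr 1
    rw [show (2 * (α + 1) - 1 : ℝ) = 2 * α + 1 by ring, czv, hβ]
    have hα1 : (α : ℝ) + 1 ≠ 0 := by positivity
    field_simp
  rw [← hsc]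
  exact hres

theorem hasGradientAt_sliceS (hΦ : IsMinkowskiNorm Φ) (hΨ : IsMinkowskiNorm Ψ)
    (hm : 1 ≤ m) (hk : 1 ≤ k) (hα : 0 < α) (hβ : β = e / (2 * (α + 1)))
    {x : Euc m × Euc k} (hT : 0 < Tg α Φ Ψ x) :
    HasGradientAt (fun σ => Tg α Φ Ψ (x.1, σ) ^ β)
      (csv α e β Φ Ψ x • xiN Ψ x.2) x.2 := by
  have hB := gradient_const_mul (hasGradientAt_dual_sq hΨ hk x.2) (4 * (α + 1) ^ 2)
  have hAB := gradient_const_add hB (dualNorm Φ x.1 ^ (2 * (α + 1)))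
  have houter : HasDerivAt (fun t : ℝ => t ^ β) (β * Tg α Φ Ψ x ^ (β - 1))
      (dualNorm Φ x.1 ^ (2 * (α + 1)) + 4 * (α + 1) ^ 2 * dualNorm Ψ x.2 ^ 2) := by
    have : (dualNorm Φ x.1 ^ (2 * (α + 1)) + 4 * (α + 1) ^ 2 * dualNorm Ψ x.2 ^ 2)
        = Tg α Φ Ψ x := rfl
    rw [this]
    exact Real.hasDerivAt_rpow_const (Or.inl hT.ne')
  have hres := gradient_scomp houter hAB
  have hsc : (β * Tg α Φ Ψ x ^ (β - 1)) •
        ((4 * (α + 1) ^ 2 : ℝ) • ((2 * dualNorm Ψ x.2) • xiN Ψ x.2))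
      = csv α e β Φ Ψ x • xiN Ψ x.2 := by
    rw [smul_smul, smul_smul]
    congr 1
    rw [csv, hβ]
    have hα1 : (α : ℝ) + 1 ≠ 0 := by positivity
    field_simp
  rw [← hsc]
  exact hres

theorem sq_rpow {x : ℝ} (hx : 0 ≤ x) (a : ℝ) : (x ^ a) ^ (2:ℕ) = x ^ (2 * a) := by
  rw [← Real.rpow_natCast (x ^ a) 2, ← Real.rpow_mul hx]
  norm_num
  ring_nf

theorem bracket_alg {a t s E A B : ℝ} (ha : 0 < a) (ht : 0 < t)
    (hsum : a ^ (2 * (A + 1)) + 4 * (A + 1) ^ 2 * s ^ 2 = t) :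
    (E * t ^ (B - 1) * a ^ (2 * A + 1)) ^ 2
      + a ^ (2 * A) / 4 * (4 * (A + 1) * E * t ^ (B - 1) * s) ^ 2
    = E ^ 2 * t ^ (2 * B - 1) * a ^ (2 * A) := by
  have h1 : (t ^ (B - 1)) ^ (2:ℕ) = t ^ (2 * B - 2) := by
    rw [sq_rpow ht.le]; ring_nf
  have h2 : (a ^ (2 * A + 1)) ^ (2:ℕ) = a ^ (2 * A) * a ^ (2 * (A + 1)) := by
    rw [sq_rpow ha.le, ← Real.rpow_add ha]; ring_nf
  have h3 : t ^ (2 * B - 2) * t = t ^ (2 * B - 1) := by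
    nth_rewrite 2 [← Real.rpow_one t]
    rw [← Real.rpow_add ht]; ring_nf
  calc (E * t ^ (B - 1) * a ^ (2 * A + 1)) ^ 2
        + a ^ (2 * A) / 4 * (4 * (A + 1) * E * t ^ (B - 1) * s) ^ 2
      = E ^ 2 * (t ^ (B - 1)) ^ (2:ℕ)
          * (a ^ (2 * A + 1)) ^ (2:ℕ)
        + a ^ (2 * A) * (4 * (A + 1) ^ 2 * E ^ 2 * (t ^ (B - 1)) ^ (2:ℕ) * s ^ 2) := by
        ring
    _ = E ^ 2 * t ^ (2 * B - 2)
          * (a ^ (2 * A) * (a ^ (2 * (A + 1)) + 4 * (A + 1) ^ 2 * s ^ 2)) := by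
        rw [h1, h2]; ring
    _ = E ^ 2 * (t ^ (2 * B - 2) * t) * a ^ (2 * A) := by rw [hsum]; ring
    _ = E ^ 2 * t ^ (2 * B - 1) * a ^ (2 * A) := by rw [h3]

theorem pow_bracket_alg {E t a P B A : ℝ} (hE : E ≠ 0) (ht : 0 < t) (ha : 0 < a) :
    (E ^ 2 * t ^ (2 * B - 1) * a ^ (2 * A)) ^ ((P - 2) / 2)
      = |E| ^ (P - 2) * t ^ ((2 * B - 1) * ((P - 2) / 2)) * a ^ (2 * A * ((P - 2) / 2)) := by
  have hE2 : (0:ℝ) < E ^ 2 := by positivity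
  rw [Real.mul_rpow (by positivity) (Real.rpow_nonneg ha.le _),
    Real.mul_rpow hE2.le (Real.rpow_nonneg ht.le _)]
  congr 1
  · congr 1
    · have h1 : (E:ℝ) ^ 2 = |E| ^ ((2:ℕ):ℝ) := by
        rw [Real.rpow_natCast]
        exact (sq_abs E).symm
      rw [h1, ← Real.rpow_mul (abs_nonneg E)]
      congr 1
      ring
    · rw [← Real.rpow_mul ht.le]
  · rw [← Real.rpow_mul ha.le]

theorem fluxZ_alg {E t a P B A D : ℝ} (hE : E ≠ 0) (ht : 0 < t) (ha : 0 < a)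
    (hD : D = (2 * B - 1) * ((P - 2) / 2) + (B - 1)) :
    (E ^ 2 * t ^ (2 * B - 1) * a ^ (2 * A)) ^ ((P - 2) / 2)
        * (E * t ^ (B - 1) * a ^ (2 * A + 1)) * a⁻¹
      = E * |E| ^ (P - 2) * a ^ (A * P) * t ^ D := by
  rw [pow_bracket_alg hE ht ha]
  have hainv : a⁻¹ = a ^ (-1 : ℝ) := by rw [Real.rpow_neg_one]
  have hta : t ^ ((2 * B - 1) * ((P - 2) / 2)) * t ^ (B - 1) = t ^ D := by
    rw [← Real.rpow_add ht, hD]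
  have haa : a ^ (2 * A * ((P - 2) / 2)) * a ^ (2 * A + 1) * a ^ (-1 : ℝ) = a ^ (A * P) := by
    rw [← Real.rpow_add ha, ← Real.rpow_add ha]
    congr 1
    ring
  calc (|E| ^ (P - 2) * t ^ ((2 * B - 1) * ((P - 2) / 2)) * a ^ (2 * A * ((P - 2) / 2)))
        * (E * t ^ (B - 1) * a ^ (2 * A + 1)) * a⁻¹
      = (E * |E| ^ (P - 2))
          * (t ^ ((2 * B - 1) * ((P - 2) / 2)) * t ^ (B - 1))
          * (a ^ (2 * A * ((P - 2) / 2)) * a ^ (2 * A + 1) * a ^ (-1:ℝ)) := by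
        rw [hainv]; ring
    _ = E * |E| ^ (P - 2) * a ^ (A * P) * t ^ D := by rw [hta, haa]; ring

theorem fluxS_alg {E t a s P B A D : ℝ} (hE : E ≠ 0) (ht : 0 < t) (ha : 0 < a) (hs : s ≠ 0)
    (hD : D = (2 * B - 1) * ((P - 2) / 2) + (B - 1)) :
    (E ^ 2 * t ^ (2 * B - 1) * a ^ (2 * A)) ^ ((P - 2) / 2)
        * (a ^ (2 * A) / 4 * (4 * (A + 1) * E * t ^ (B - 1) * s)) * s⁻¹
      = (A + 1) * (E * |E| ^ (P - 2) * a ^ (A * P) * t ^ D) := by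
  rw [pow_bracket_alg hE ht ha]
  have hta : t ^ ((2 * B - 1) * ((P - 2) / 2)) * t ^ (B - 1) = t ^ D := by
    rw [← Real.rpow_add ht, hD]
  have haa2 : a ^ (2 * A * ((P - 2) / 2)) * a ^ (2 * A) = a ^ (A * P) := by
    rw [← Real.rpow_add ha]
    congr 1
    ring
  calc (|E| ^ (P - 2) * t ^ ((2 * B - 1) * ((P - 2) / 2)) * a ^ (2 * A * ((P - 2) / 2)))
        * (a ^ (2 * A) / 4 * (4 * (A + 1) * E * t ^ (B - 1) * s)) * s⁻¹
      = (A + 1) * ((E * |E| ^ (P - 2))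
          * (t ^ ((2 * B - 1) * ((P - 2) / 2)) * t ^ (B - 1))
          * (a ^ (2 * A * ((P - 2) / 2)) * a ^ (2 * A))) * (s * s⁻¹) := by
        ring
    _ = (A + 1) * (E * |E| ^ (P - 2) * a ^ (A * P) * t ^ D) := by
        rw [hta, haa2, mul_inv_cancel₀ hs, mul_one]; ring

theorem gradZ_eq (hΦ : IsMinkowskiNorm Φ) (hΨ : IsMinkowskiNorm Ψ)
    (hm : 1 ≤ m) (hk : 1 ≤ k) (hα : 0 < α) (hβ : β = e / (2 * (α + 1)))
    {y : Euc m × Euc k} (hy : y ≠ 0) :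
    gradZ (fun x => rho α Φ Ψ x ^ e) y = czv α e β Φ Ψ y • xiN Φ y.1 := by
  have hT := Tg_pos hΦ hΨ hm hk hα hy
  have hg := hasGradientAt_sliceZ hΦ hΨ hm hk hα hβ hT
  have hfun : (fun z => rho α Φ Ψ (z, y.2) ^ e) = fun z => Tg α Φ Ψ (z, y.2) ^ β := by
    funext z
    exact rho_pow_eq hΦ hΨ hm hk hα hβ (z, y.2)
  have h0 : gradZ (fun x => rho α Φ Ψ x ^ e) y
      = gradient (fun z => rho α Φ Ψ (z, y.2) ^ e) y.1 := rfl
  rw [h0, hfun]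
  exact hg.gradient

theorem gradS_eq (hΦ : IsMinkowskiNorm Φ) (hΨ : IsMinkowskiNorm Ψ)
    (hm : 1 ≤ m) (hk : 1 ≤ k) (hα : 0 < α) (hβ : β = e / (2 * (α + 1)))
    {y : Euc m × Euc k} (hy : y ≠ 0) :
    gradS (fun x => rho α Φ Ψ x ^ e) y = csv α e β Φ Ψ y • xiN Ψ y.2 := by
  have hT := Tg_pos hΦ hΨ hm hk hα hy
  have hg := hasGradientAt_sliceS hΦ hΨ hm hk hα hβ hT
  have hfun : (fun σ => rho α Φ Ψ (y.1, σ) ^ e) = fun σ => Tg α Φ Ψ (y.1, σ) ^ β := by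
    funext σ
    exact rho_pow_eq hΦ hΨ hm hk hα hβ (y.1, σ)
  have h0 : gradS (fun x => rho α Φ Ψ x ^ e) y
      = gradient (fun σ => rho α Φ Ψ (y.1, σ) ^ e) y.2 := rfl
  rw [h0, hfun]
  exact hg.gradient

/-- The density `W` of the flux field. -/
def Wg (α p e δ : ℝ) (Φ : Euc m → ℝ) (Ψ : Euc k → ℝ) (y : Euc m × Euc k) : ℝ :=
  e * |e| ^ (p - 2) * dualNorm Φ y.1 ^ (α * p) * Tg α Φ Ψ y ^ δ

theorem Wg_zero (hΦ : IsMinkowskiNorm Φ) (hΨ : IsMinkowskiNorm Ψ)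
    (hm : 1 ≤ m) (hk : 1 ≤ k) (hα : 0 < α) (hp : 1 < p)
    {y : Euc m × Euc k} (hy1 : y.1 = 0) : Wg α p e δ Φ Ψ y = 0 := by
  have h1 : dualNorm Φ y.1 = 0 := by rw [hy1]; exact dual_zero hΦ hm
  have h2 : dualNorm Φ y.1 ^ (α * p) = 0 := by
    rw [h1]
    exact Real.zero_rpow (by positivity)
  rw [Wg, h2]
  ring

theorem czv_zero (hΦ : IsMinkowskiNorm Φ) (hΨ : IsMinkowskiNorm Ψ)
    (hm : 1 ≤ m) (hk : 1 ≤ k) (hα : 0 < α)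
    {y : Euc m × Euc k} (hy1 : y.1 = 0) : czv α e β Φ Ψ y = 0 := by
  have h1 : dualNorm Φ y.1 = 0 := by rw [hy1]; exact dual_zero hΦ hm
  have h2 : dualNorm Φ y.1 ^ (2 * α + 1) = 0 := by
    rw [h1]
    exact Real.zero_rpow (by positivity)
  rw [czv, h2]
  ring

theorem csv_zero (hΦ : IsMinkowskiNorm Φ) (hΨ : IsMinkowskiNorm Ψ)
    (hm : 1 ≤ m) (hk : 1 ≤ k) (hα : 0 < α)
    {y : Euc m × Euc k} (hy2 : y.2 = 0) : csv α e β Φ Ψ y = 0 := by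
  have h1 : dualNorm Ψ y.2 = 0 := by rw [hy2]; exact dual_zero hΨ hk
  rw [csv, h1]
  ring

/-- The bracket `Φ(∇_z u)² + (Φ⁰)^{2α}/4 Ψ(∇_σ u)²` in closed form. -/
theorem bracket_eq (hΦ : IsMinkowskiNorm Φ) (hΨ : IsMinkowskiNorm Ψ)
    (hm : 1 ≤ m) (hk : 1 ≤ k) (hα : 0 < α) (hβ : β = e / (2 * (α + 1)))
    {y : Euc m × Euc k} (hy : y ≠ 0) (hy1 : y.1 ≠ 0) :
    Φ (gradZ (fun x => rho α Φ Ψ x ^ e) y) ^ 2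
      + dualNorm Φ y.1 ^ (2 * α) / 4 * Ψ (gradS (fun x => rho α Φ Ψ x ^ e) y) ^ 2
    = e ^ 2 * Tg α Φ Ψ y ^ (2 * β - 1) * dualNorm Φ y.1 ^ (2 * α) := by
  have hM : 0 < dualNorm Φ y.1 := dual_pos hΦ hm hy1
  have hT : 0 < Tg α Φ Ψ y := Tg_pos hΦ hΨ hm hk hα hy
  rw [gradZ_eq hΦ hΨ hm hk hα hβ hy, gradS_eq hΦ hΨ hm hk hα hβ hy]
  have hΦgz : Φ (czv α e β Φ Ψ y • xiN Φ y.1) ^ 2 = czv α e β Φ Ψ y ^ 2 := by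
    rw [hΦ.2.1, xiN_norm hΦ hm, mul_one, sq_abs]
  have hΨgs : Ψ (csv α e β Φ Ψ y • xiN Ψ y.2) ^ 2 = csv α e β Φ Ψ y ^ 2 := by
    rcases eq_or_ne y.2 0 with h2 | h2
    · rw [csv_zero hΦ hΨ hm hk hα h2]
      rw [zero_smul]
      rw [zero_eq hΨ]
    · rw [hΨ.2.1, xiN_norm hΨ hk, mul_one, sq_abs]
  rw [hΦgz, hΨgs, czv, csv]
  exact bracket_alg hM hT rfl

/-- The flux in the `z` direction in closed form, for `y ≠ 0`. -/
theorem fluxZ_eq (hΦ : IsMinkowskiNorm Φ) (hΨ : IsMinkowskiNorm Ψ)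
    (hm : 1 ≤ m) (hk : 1 ≤ k) (hα : 0 < α) (hp : 1 < p) (he : e ≠ 0)
    (hβ : β = e / (2 * (α + 1))) (hδ : δ = (2 * β - 1) * ((p - 2) / 2) + (β - 1))
    {y : Euc m × Euc k} (hy : y ≠ 0) :
    (Φ (gradZ (fun x => rho α Φ Ψ x ^ e) y) ^ 2
        + dualNorm Φ y.1 ^ (2 * α) / 4 * Ψ (gradS (fun x => rho α Φ Ψ x ^ e) y) ^ 2)
          ^ ((p - 2) / 2) •
      (Φ (gradZ (fun x => rho α Φ Ψ x ^ e) y) •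
        gradient Φ (gradZ (fun x => rho α Φ Ψ x ^ e) y))
    = Wg α p e δ Φ Ψ y • y.1 := by
  rcases eq_or_ne y.1 0 with hy1 | hy1
  · rw [gradZ_eq hΦ hΨ hm hk hα hβ hy]
    rw [czv_zero hΦ hΨ hm hk hα hy1, zero_smul]
    rw [zero_eq hΦ, zero_smul, smul_zero]
    rw [Wg_zero hΦ hΨ hm hk hα hp hy1, zero_smul]
  · have hM : 0 < dualNorm Φ y.1 := dual_pos hΦ hm hy1
    have hT : 0 < Tg α Φ Ψ y := Tg_pos hΦ hΨ hm hk hα hy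
    rw [bracket_eq hΦ hΨ hm hk hα hβ hy hy1]
    rw [gradZ_eq hΦ hΨ hm hk hα hβ hy]
    have hpair : Φ (czv α e β Φ Ψ y • xiN Φ y.1) •
          gradient Φ (czv α e β Φ Ψ y • xiN Φ y.1)
        = czv α e β Φ Ψ y • ((dualNorm Φ y.1)⁻¹ • y.1) := by
      rw [weighted_grad_smul hΦ (xiN_ne_zero hΦ hm y.1) (czv α e β Φ Ψ y)]
      rw [xiN_norm hΦ hm, (hasGradientAt_N_xi hΦ hm hy1).gradient, one_smul]
    rw [hpair, smul_smul, smul_smul]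
    congr 1
    rw [czv, Wg]
    exact fluxZ_alg he hT hM hδ

/-- The flux in the `σ` direction in closed form, for `y ≠ 0`. -/
theorem fluxS_eq (hΦ : IsMinkowskiNorm Φ) (hΨ : IsMinkowskiNorm Ψ)
    (hm : 1 ≤ m) (hk : 1 ≤ k) (hα : 0 < α) (hp : 1 < p) (he : e ≠ 0)
    (hβ : β = e / (2 * (α + 1))) (hδ : δ = (2 * β - 1) * ((p - 2) / 2) + (β - 1))
    {y : Euc m × Euc k} (hy : y ≠ 0) :
    (Φ (gradZ (fun x => rho α Φ Ψ x ^ e) y) ^ 2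
        + dualNorm Φ y.1 ^ (2 * α) / 4 * Ψ (gradS (fun x => rho α Φ Ψ x ^ e) y) ^ 2)
          ^ ((p - 2) / 2) •
      ((dualNorm Φ y.1 ^ (2 * α) / 4 * Ψ (gradS (fun x => rho α Φ Ψ x ^ e) y)) •
        gradient Ψ (gradS (fun x => rho α Φ Ψ x ^ e) y))
    = ((α + 1) * Wg α p e δ Φ Ψ y) • y.2 := by
  rcases eq_or_ne y.1 0 with hy1 | hy1
  · have hM0 : dualNorm Φ y.1 = 0 := by rw [hy1]; exact dual_zero hΦ hm
    have hM2 : dualNorm Φ y.1 ^ (2 * α) = 0 := by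
      rw [hM0]; exact Real.zero_rpow (by positivity)
    rw [hM2, Wg_zero hΦ hΨ hm hk hα hp hy1]
    simp only [zero_div, zero_mul, zero_smul, smul_zero, mul_zero]
  rcases eq_or_ne y.2 0 with hy2 | hy2
  · rw [gradS_eq hΦ hΨ hm hk hα hβ hy, csv_zero hΦ hΨ hm hk hα hy2, zero_smul]
    rw [zero_eq hΨ, mul_zero, zero_smul, smul_zero]
    conv_rhs => rw [hy2]
    rw [smul_zero]
  · have hM : 0 < dualNorm Φ y.1 := dual_pos hΦ hm hy1
    have hT : 0 < Tg α Φ Ψ y := Tg_pos hΦ hΨ hm hk hα hy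
    have hs : 0 < dualNorm Ψ y.2 := dual_pos hΨ hk hy2
    rw [bracket_eq hΦ hΨ hm hk hα hβ hy hy1]
    rw [gradS_eq hΦ hΨ hm hk hα hβ hy]
    have hpair : Ψ (csv α e β Φ Ψ y • xiN Ψ y.2) •
          gradient Ψ (csv α e β Φ Ψ y • xiN Ψ y.2)
        = csv α e β Φ Ψ y • ((dualNorm Ψ y.2)⁻¹ • y.2) := by
      rw [weighted_grad_smul hΨ (xiN_ne_zero hΨ hk y.2) (csv α e β Φ Ψ y)]
      rw [xiN_norm hΨ hk, (hasGradientAt_N_xi hΨ hk hy2).gradient, one_smul]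
    rw [mul_smul, hpair, smul_smul, smul_smul, smul_smul]
    congr 1
    have halg := fluxS_alg (E := e) (t := Tg α Φ Ψ y) (a := dualNorm Φ y.1)
      (s := dualNorm Ψ y.2) (P := p) (B := β) (A := α) (D := δ) he hT hM (ne_of_gt hs) hδ
    rw [csv, Wg]
    rw [← halg]
    ring

/-- Divergence of `y ↦ W(y) • y.1` in the `z` variables, given differentiability of the slice. -/
theorem divZ_density_smul {W : Euc m × Euc k → ℝ} {x : Euc m × Euc k} {g : Euc m}
    (hW : HasGradientAt (fun z => W (z, x.2)) g x.1) :
    divZ (fun y => W y • y.1) x = m * W x + ⟪g, x.1⟫ := by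
  have hWf : HasFDerivAt (fun z => W (z, x.2)) (InnerProductSpace.toDual ℝ (Euc m) g) x.1 :=
    hasGradientAt_iff_hasFDerivAt.1 hW
  have hcomp : ∀ i : Fin m, fderiv ℝ (fun z => (W ((z, x.2)) • z : Euc m) i) x.1
      (EuclideanSpace.single i 1) = W (x.1, x.2) + x.1 i * g i := by
    intro i
    have hproj : HasFDerivAt (fun z : Euc m => z i) (EuclideanSpace.proj i (𝕜 := ℝ)) x.1 :=
      (EuclideanSpace.proj i (𝕜 := ℝ)).hasFDerivAt
    have hmul : HasFDerivAt (fun z : Euc m => W (z, x.2) * z i) _ x.1 := hWf.mul hproj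
    have hfun : (fun z : Euc m => (W ((z, x.2)) • z : Euc m) i)
        = fun z : Euc m => W (z, x.2) * z i := by
      funext z
      rfl
    rw [hfun, hmul.fderiv]
    simp only [ContinuousLinearMap.add_apply, ContinuousLinearMap.smul_apply,
      smul_eq_mul]
    have h1 : (EuclideanSpace.proj i (𝕜 := ℝ)) (EuclideanSpace.single i (1:ℝ)) = 1 := by
      simp
    have h2 : (InnerProductSpace.toDual ℝ (Euc m) g) (EuclideanSpace.single i (1:ℝ))
        = g i := by
      rw [InnerProductSpace.toDual_apply_apply]
      rw [EuclideanSpace.inner_single_right]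
      simp
    rw [h1, h2]
    ring
  have hsum : divZ (fun y => W y • y.1) x
      = ∑ i : Fin m, (W (x.1, x.2) + x.1 i * g i) := by
    unfold divZ
    exact Finset.sum_congr rfl fun i _ => hcomp i
  rw [hsum, Finset.sum_add_distrib, Finset.sum_const, Finset.card_univ]
  have hin : ⟪g, x.1⟫ = ∑ i : Fin m, x.1 i * g i := by
    rw [real_inner_comm]
    rw [PiLp.inner_apply]
    simp [RCLike.inner_apply]
    exact Finset.sum_congr rfl fun i _ => mul_comm _ _
  rw [hin]
  simp [Fintype.card_fin]

/-- Divergence of `y ↦ W(y) • y.2` in the `σ` variables, given differentiability of the slice. -/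
theorem divS_density_smul {W : Euc m × Euc k → ℝ} {x : Euc m × Euc k} {g : Euc k}
    (hW : HasGradientAt (fun σ => W (x.1, σ)) g x.2) :
    divS (fun y => W y • y.2) x = k * W x + ⟪g, x.2⟫ := by
  have hWf : HasFDerivAt (fun σ => W (x.1, σ)) (InnerProductSpace.toDual ℝ (Euc k) g) x.2 :=
    hasGradientAt_iff_hasFDerivAt.1 hW
  have hcomp : ∀ i : Fin k, fderiv ℝ (fun σ => (W ((x.1, σ)) • σ : Euc k) i) x.2
      (EuclideanSpace.single i 1) = W (x.1, x.2) + x.2 i * g i := by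
    intro i
    have hproj : HasFDerivAt (fun σ : Euc k => σ i) (EuclideanSpace.proj i (𝕜 := ℝ)) x.2 :=
      (EuclideanSpace.proj i (𝕜 := ℝ)).hasFDerivAt
    have hmul : HasFDerivAt (fun σ : Euc k => W (x.1, σ) * σ i) _ x.2 := hWf.mul hproj
    have hfun : (fun σ : Euc k => (W ((x.1, σ)) • σ : Euc k) i)
        = fun σ : Euc k => W (x.1, σ) * σ i := by
      funext σ
      rfl
    rw [hfun, hmul.fderiv]
    simp only [ContinuousLinearMap.add_apply, ContinuousLinearMap.smul_apply,
      smul_eq_mul]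
    have h1 : (EuclideanSpace.proj i (𝕜 := ℝ)) (EuclideanSpace.single i (1:ℝ)) = 1 := by
      simp
    have h2 : (InnerProductSpace.toDual ℝ (Euc k) g) (EuclideanSpace.single i (1:ℝ))
        = g i := by
      rw [InnerProductSpace.toDual_apply_apply]
      rw [EuclideanSpace.inner_single_right]
      simp
    rw [h1, h2]
    ring
  have hsum : divS (fun y => W y • y.2) x
      = ∑ i : Fin k, (W (x.1, x.2) + x.2 i * g i) := by
    unfold divS
    exact Finset.sum_congr rfl fun i _ => hcomp i
  rw [hsum, Finset.sum_add_distrib, Finset.sum_const, Finset.card_univ]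
  have hin : ⟪g, x.2⟫ = ∑ i : Fin k, x.2 i * g i := by
    rw [real_inner_comm]
    rw [PiLp.inner_apply]
    simp [RCLike.inner_apply]
    exact Finset.sum_congr rfl fun i _ => mul_comm _ _
  rw [hin]
  simp [Fintype.card_fin]

theorem hasGradientAt_Wz (hΦ : IsMinkowskiNorm Φ) (hΨ : IsMinkowskiNorm Ψ)
    (hm : 1 ≤ m) (hk : 1 ≤ k) (hα : 0 < α)
    {x : Euc m × Euc k} (hx : x ≠ 0) (hx1 : x.1 ≠ 0) :
    ∃ g : Euc m, HasGradientAt (fun z => Wg α p e δ Φ Ψ (z, x.2)) g x.1 ∧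
      ⟪g, x.1⟫ = α * p * Wg α p e δ Φ Ψ x
        + 2 * (α + 1) * δ * (e * |e| ^ (p - 2)) * dualNorm Φ x.1 ^ (α * p)
            * Tg α Φ Ψ x ^ (δ - 1) * dualNorm Φ x.1 ^ (2 * (α + 1)) := by
  have hM : 0 < dualNorm Φ x.1 := dual_pos hΦ hm hx1
  have hT : 0 < Tg α Φ Ψ x := Tg_pos hΦ hΨ hm hk hα hx
  have hr : (1:ℝ) < 2 * (α + 1) := by linarith
  -- gradient of f1 = dualNorm^['αp]
  have hf1 : HasGradientAt (fun z => dualNorm Φ z ^ (α * p))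
      ((α * p * dualNorm Φ x.1 ^ (α * p - 1)) • xiN Φ x.1) x.1 :=
    gradient_scomp (Real.hasDerivAt_rpow_const (Or.inl hM.ne')) (hasGradientAt_dualNorm hΦ hm hx1)
  have hf1' := gradient_const_mul hf1 (e * |e| ^ (p - 2))
  -- gradient of f2 = Tg(·, x.2)^δ
  have hA := hasGradientAt_dual_rpow hΦ hm hr x.1
  have hAB := gradient_add_const hA (4 * (α + 1) ^ 2 * dualNorm Ψ x.2 ^ 2)
  have houter : HasDerivAt (fun t : ℝ => t ^ δ) (δ * Tg α Φ Ψ x ^ (δ - 1))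
      (dualNorm Φ x.1 ^ (2 * (α + 1)) + 4 * (α + 1) ^ 2 * dualNorm Ψ x.2 ^ 2) := by
    have h0 : (dualNorm Φ x.1 ^ (2 * (α + 1)) + 4 * (α + 1) ^ 2 * dualNorm Ψ x.2 ^ 2)
        = Tg α Φ Ψ x := rfl
    rw [h0]
    exact Real.hasDerivAt_rpow_const (Or.inl hT.ne')
  have hf2 := gradient_scomp houter hAB
  have hprod := gradient_mul hf1' hf2
  refine ⟨_, hprod, ?_⟩
  have hξx : ⟪xiN Φ x.1, x.1⟫ = dualNorm Φ x.1 := by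
    rw [real_inner_comm]
    exact (dual_eq hΦ hm x.1).symm
  rw [inner_add_left, real_inner_smul_left, real_inner_smul_left, real_inner_smul_left,
    real_inner_smul_left, real_inner_smul_left, hξx]
  have hM1 : dualNorm Φ x.1 ^ (2 * (α + 1) - 1) * dualNorm Φ x.1
      = dualNorm Φ x.1 ^ (2 * (α + 1)) := by
    nth_rewrite 2 [← Real.rpow_one (dualNorm Φ x.1)]
    rw [← Real.rpow_add hM]
    ring_nf
  have hM2 : dualNorm Φ x.1 ^ (α * p - 1) * dualNorm Φ x.1
      = dualNorm Φ x.1 ^ (α * p) := by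
    nth_rewrite 2 [← Real.rpow_one (dualNorm Φ x.1)]
    rw [← Real.rpow_add hM]
    ring_nf
  have hWgx : Wg α p e δ Φ Ψ x
      = e * |e| ^ (p - 2) * dualNorm Φ x.1 ^ (α * p) * Tg α Φ Ψ x ^ δ := rfl
  have hTg0 : (dualNorm Φ x.1 ^ (2 * (α + 1)) + 4 * (α + 1) ^ 2 * dualNorm Ψ x.2 ^ 2)
      = Tg α Φ Ψ x := rfl
  rw [hWgx, hTg0, real_inner_smul_left, hξx]
  linear_combination (e * |e| ^ (p - 2) * dualNorm Φ x.1 ^ (α * p)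
      * (δ * Tg α Φ Ψ x ^ (δ - 1)) * (2 * (α + 1))) * hM1
    + (Tg α Φ Ψ x ^ δ * (e * |e| ^ (p - 2)) * (α * p)) * hM2

theorem hasGradientAt_Ws (hΦ : IsMinkowskiNorm Φ) (hΨ : IsMinkowskiNorm Ψ)
    (hm : 1 ≤ m) (hk : 1 ≤ k) (hα : 0 < α)
    {x : Euc m × Euc k} (hx : x ≠ 0) (hx1 : x.1 ≠ 0) :
    ∃ g : Euc k, HasGradientAt (fun σ => Wg α p e δ Φ Ψ (x.1, σ)) g x.2 ∧
      ⟪g, x.2⟫ = 2 * δ * (e * |e| ^ (p - 2)) * dualNorm Φ x.1 ^ (α * p)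
          * Tg α Φ Ψ x ^ (δ - 1) * (4 * (α + 1) ^ 2 * dualNorm Ψ x.2 ^ 2) := by
  have hM : 0 < dualNorm Φ x.1 := dual_pos hΦ hm hx1
  have hT : 0 < Tg α Φ Ψ x := Tg_pos hΦ hΨ hm hk hα hx
  have hB := gradient_const_mul (hasGradientAt_dual_sq hΨ hk x.2) (4 * (α + 1) ^ 2)
  have hAB := gradient_const_add hB (dualNorm Φ x.1 ^ (2 * (α + 1)))
  have houter : HasDerivAt (fun t : ℝ => t ^ δ) (δ * Tg α Φ Ψ x ^ (δ - 1))
      (dualNorm Φ x.1 ^ (2 * (α + 1)) + 4 * (α + 1) ^ 2 * dualNorm Ψ x.2 ^ 2) := by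
    have h0 : (dualNorm Φ x.1 ^ (2 * (α + 1)) + 4 * (α + 1) ^ 2 * dualNorm Ψ x.2 ^ 2)
        = Tg α Φ Ψ x := rfl
    rw [h0]
    exact Real.hasDerivAt_rpow_const (Or.inl hT.ne')
  have hf2 := gradient_scomp houter hAB
  have hres := gradient_const_mul hf2 (e * |e| ^ (p - 2) * dualNorm Φ x.1 ^ (α * p))
  refine ⟨_, hres, ?_⟩
  have hξσ : dualNorm Ψ x.2 * ⟪xiN Ψ x.2, x.2⟫ = dualNorm Ψ x.2 ^ 2 := by
    rcases eq_or_ne x.2 0 with h2 | h2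
    · rw [h2, dual_zero hΨ hk]
      simp
    · rw [real_inner_comm, ← dual_eq hΨ hk x.2]
      ring
  rw [real_inner_smul_left, real_inner_smul_left, real_inner_smul_left, real_inner_smul_left]
  linear_combination (e * |e| ^ (p - 2) * dualNorm Φ x.1 ^ (α * p)
      * (δ * Tg α Φ Ψ x ^ (δ - 1)) * (8 * (α + 1) ^ 2)) * hξσ

/-- The key exponent identity `Q + αp + 2(α+1)δ = 0`. -/
theorem exponent_key {α p Q e β δ : ℝ} (hp : p ≠ 1) (hα : 0 < α)
    (he : e = -((Q - p) / (p - 1))) (hβ : β = e / (2 * (α + 1)))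
    (hδ : δ = (2 * β - 1) * ((p - 2) / 2) + (β - 1)) :
    Q + α * p + 2 * (α + 1) * δ = 0 := by
  have hp1 : p - 1 ≠ 0 := fun h => hp (by linarith)
  have hα1 : (α:ℝ) + 1 ≠ 0 := by positivity
  subst hδ hβ he
  field_simp
  ring

/-- Total divergence of the flux vector field vanishes. -/
theorem div_flux_zero (hΦ : IsMinkowskiNorm Φ) (hΨ : IsMinkowskiNorm Ψ)
    (hm : 1 ≤ m) (hk : 1 ≤ k) (hα : 0 < α) (hp : 1 < p)
    (hQsum : (m:ℝ) + (α + 1) * k + α * p + 2 * (α + 1) * δ = 0)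
    {x : Euc m × Euc k} (hx : x ≠ 0) (hx1 : x.1 ≠ 0) :
    divZ (fun y => Wg α p e δ Φ Ψ y • y.1) x
      + divS (fun y => ((α + 1) * Wg α p e δ Φ Ψ y) • y.2) x = 0 := by
  have hM : 0 < dualNorm Φ x.1 := dual_pos hΦ hm hx1
  have hT : 0 < Tg α Φ Ψ x := Tg_pos hΦ hΨ hm hk hα hx
  obtain ⟨g1, hg1, hin1⟩ := hasGradientAt_Wz hΦ hΨ hm hk hα hx hx1
  obtain ⟨g2, hg2, hin2⟩ := hasGradientAt_Ws hΦ hΨ hm hk hα hx hx1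
  have hdivZ := divZ_density_smul (W := fun y => Wg α p e δ Φ Ψ y) (x := x) hg1
  have hg2' := gradient_const_mul hg2 (α + 1)
  have hdivS := divS_density_smul (W := fun y => (α + 1) * Wg α p e δ Φ Ψ y) (x := x) hg2'
  rw [hdivZ, hdivS, real_inner_smul_left, hin1, hin2]
  have hWx : Wg α p e δ Φ Ψ x
      = e * |e| ^ (p - 2) * dualNorm Φ x.1 ^ (α * p) * Tg α Φ Ψ x ^ δ := rfl
  have hWxx : Wg α p e δ Φ Ψ (x.1, x.2) = Wg α p e δ Φ Ψ x := rfl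
  have hTT : Tg α Φ Ψ x ^ (δ - 1)
        * (dualNorm Φ x.1 ^ (2 * (α + 1)) + 4 * (α + 1) ^ 2 * dualNorm Ψ x.2 ^ 2)
      = Tg α Φ Ψ x ^ δ := by
    have h0 : (dualNorm Φ x.1 ^ (2 * (α + 1)) + 4 * (α + 1) ^ 2 * dualNorm Ψ x.2 ^ 2)
        = Tg α Φ Ψ x := rfl
    rw [h0]
    nth_rewrite 2 [← Real.rpow_one (Tg α Φ Ψ x)]
    rw [← Real.rpow_add hT]
    ring_nf
  rw [hWxx, hWx]
  linear_combination (2 * (α + 1) * δ * (e * |e| ^ (p - 2)) * dualNorm Φ x.1 ^ (α * p)) * hTT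
    + (e * |e| ^ (p - 2) * dualNorm Φ x.1 ^ (α * p) * Tg α Φ Ψ x ^ δ) * hQsum

theorem abs_apply_le_norm {n : ℕ} (z : Euc n) (i : Fin n) : |z i| ≤ ‖z‖ := by
  have h1 : z i = ⟪EuclideanSpace.single i (1:ℝ), z⟫ := by
    rw [EuclideanSpace.inner_single_left]
    simp
  rw [h1]
  calc |⟪EuclideanSpace.single i (1:ℝ), z⟫| ≤ ‖EuclideanSpace.single i (1:ℝ)‖ * ‖z‖ :=
        abs_real_inner_le_norm _ _
    _ = ‖z‖ := by rw [EuclideanSpace.norm_single]; simp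

theorem divZ_W_zero (hΦ : IsMinkowskiNorm Φ) (hΨ : IsMinkowskiNorm Ψ)
    (hm : 1 ≤ m) (hk : 1 ≤ k) (hα : 0 < α) (hp : 1 < p)
    {x : Euc m × Euc k} (hx1 : x.1 = 0) (hx2 : x.2 ≠ 0) :
    divZ (fun y => Wg α p e δ Φ Ψ y • y.1) x = 0 := by
  have hap : (0:ℝ) < α * p := by nlinarith
  obtain ⟨C, hC, hCle⟩ := dual_le hΦ hm
  set B₀ : ℝ := 4 * (α + 1) ^ 2 * dualNorm Ψ x.2 ^ 2 with hB₀def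
  have hB₀ : 0 < B₀ := by
    have := dual_pos hΨ hk hx2
    positivity
  set R : ℝ := C ^ (2 * (α + 1)) + B₀ with hRdef
  have hR : 0 < R := by
    have : (0:ℝ) ≤ C ^ (2 * (α + 1)) := Real.rpow_nonneg hC.le _
    linarith
  set K : ℝ := B₀ ^ δ + R ^ δ with hKdef
  have hK : 0 ≤ K := by
    have h1 : (0:ℝ) ≤ B₀ ^ δ := Real.rpow_nonneg hB₀.le _
    have h2 : (0:ℝ) ≤ R ^ δ := Real.rpow_nonneg hR.le _
    linarith
  set D : ℝ := |e| * |e| ^ (p - 2) * C ^ (α * p) * K with hDdef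
  have hD : 0 ≤ D := by
    have : (0:ℝ) ≤ |e| ^ (p-2) := Real.rpow_nonneg (abs_nonneg e) _
    have : (0:ℝ) ≤ C ^ (α*p) := Real.rpow_nonneg hC.le _
    positivity
  have hWbound : ∀ z : Euc m, ‖z‖ ≤ 1 → |Wg α p e δ Φ Ψ (z, x.2)| ≤ D * ‖z‖ ^ (α * p) := by
    intro z hz
    have hMz : 0 ≤ dualNorm Φ z := dual_nonneg hΦ hm z
    have hTlow : B₀ ≤ Tg α Φ Ψ (z, x.2) := by
      have : (0:ℝ) ≤ dualNorm Φ z ^ (2 * (α + 1)) := Real.rpow_nonneg hMz _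
      have h0 : Tg α Φ Ψ (z, x.2)
          = dualNorm Φ z ^ (2 * (α + 1)) + B₀ := rfl
      rw [h0]
      linarith
    have hThigh : Tg α Φ Ψ (z, x.2) ≤ R := by
      have h0 : Tg α Φ Ψ (z, x.2)
          = dualNorm Φ z ^ (2 * (α + 1)) + B₀ := rfl
      rw [h0, hRdef]
      have h1 : dualNorm Φ z ≤ C := by
        calc dualNorm Φ z ≤ C * ‖z‖ := hCle z
          _ ≤ C * 1 := by nlinarith
          _ = C := mul_one C
      have h2 : dualNorm Φ z ^ (2 * (α + 1)) ≤ C ^ (2 * (α + 1)) :=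
        Real.rpow_le_rpow hMz h1 (by linarith)
      linarith
    have hTpos : 0 < Tg α Φ Ψ (z, x.2) := lt_of_lt_of_le hB₀ hTlow
    have hTd : Tg α Φ Ψ (z, x.2) ^ δ ≤ K := by
      rcases le_or_gt 0 δ with hδ0 | hδ0
      · have h1 : Tg α Φ Ψ (z, x.2) ^ δ ≤ R ^ δ :=
          Real.rpow_le_rpow hTpos.le hThigh hδ0
        have h2 : (0:ℝ) ≤ B₀ ^ δ := Real.rpow_nonneg hB₀.le _
        rw [hKdef]; linarith
      · have h1 : Tg α Φ Ψ (z, x.2) ^ δ ≤ B₀ ^ δ :=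
          Real.rpow_le_rpow_of_nonpos hB₀ hTlow hδ0.le
        have h2 : (0:ℝ) ≤ R ^ δ := Real.rpow_nonneg hR.le _
        rw [hKdef]; linarith
    have hMp : dualNorm Φ z ^ (α * p) ≤ C ^ (α * p) * ‖z‖ ^ (α * p) := by
      calc dualNorm Φ z ^ (α * p) ≤ (C * ‖z‖) ^ (α * p) :=
            Real.rpow_le_rpow hMz (hCle z) hap.le
        _ = C ^ (α * p) * ‖z‖ ^ (α * p) := Real.mul_rpow hC.le (norm_nonneg z)
    have hWabs : |Wg α p e δ Φ Ψ (z, x.2)|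
        = (|e| * |e| ^ (p - 2)) * dualNorm Φ z ^ (α * p) * Tg α Φ Ψ (z, x.2) ^ δ := by
      have h0 : Wg α p e δ Φ Ψ (z, x.2)
          = e * |e| ^ (p - 2) * dualNorm Φ z ^ (α * p) * Tg α Φ Ψ (z, x.2) ^ δ := rfl
      rw [h0, abs_mul, abs_mul, abs_mul]
      rw [abs_of_nonneg (Real.rpow_nonneg (abs_nonneg e) _)]
      rw [abs_of_nonneg (Real.rpow_nonneg hMz _)]
      rw [abs_of_nonneg (Real.rpow_nonneg hTpos.le _)]
    rw [hWabs, hDdef]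
    have he2 : (0:ℝ) ≤ |e| * |e| ^ (p - 2) :=
      mul_nonneg (abs_nonneg e) (Real.rpow_nonneg (abs_nonneg e) _)
    have hz0 : (0:ℝ) ≤ ‖z‖ ^ (α * p) := Real.rpow_nonneg (norm_nonneg z) _
    calc (|e| * |e| ^ (p - 2)) * dualNorm Φ z ^ (α * p) * Tg α Φ Ψ (z, x.2) ^ δ
        ≤ (|e| * |e| ^ (p - 2)) * (C ^ (α * p) * ‖z‖ ^ (α * p)) * K := by
          apply mul_le_mul
          · exact mul_le_mul_of_nonneg_left hMp he2
          · exact hTd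
          · exact Real.rpow_nonneg hTpos.le _
          · positivity
      _ = |e| * |e| ^ (p - 2) * C ^ (α * p) * K * ‖z‖ ^ (α * p) := by ring
  -- each component has zero derivative at x.1 = 0
  have hcomp : ∀ i : Fin m,
      HasFDerivAt (fun z => (Wg α p e δ Φ Ψ (z, x.2) • z : Euc m) i)
        (0 : Euc m →L[ℝ] ℝ) (0 : Euc m) := by
    intro i
    rw [hasFDerivAt_iff_isLittleO_nhds_zero]
    rw [Asymptotics.isLittleO_iff]
    intro c hc
    have htend : Filter.Tendsto (fun z : Euc m => D * ‖z‖ ^ (α * p)) (nhds 0) (nhds 0) := by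
      have h1 : Filter.Tendsto (fun z : Euc m => ‖z‖) (nhds 0) (nhds 0) := by
        simpa using (continuous_norm (E := Euc m)).tendsto 0
      have h3 : Filter.Tendsto (fun t : ℝ => t ^ (α * p)) (nhds 0) (nhds 0) := by
        have := (Real.continuousAt_rpow_const 0 (α * p) (Or.inr hap.le)).tendsto
        simpa [Real.zero_rpow hap.ne'] using this
      have h2 : Filter.Tendsto (fun t : ℝ => D * t ^ (α * p)) (nhds 0) (nhds 0) := by
        simpa using h3.const_mul D
      exact h2.comp h1
    filter_upwards [htend.eventually_le_const hc,
      Metric.closedBall_mem_nhds (0 : Euc m) one_pos] with z hz1 hz2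
    have hzn : ‖z‖ ≤ 1 := by
      rw [Metric.mem_closedBall, dist_zero_right] at hz2
      exact hz2
    have hval : ((Wg α p e δ Φ Ψ ((0:Euc m) + z, x.2) • ((0:Euc m) + z) : Euc m) i)
        = Wg α p e δ Φ Ψ (z, x.2) * z i := by
      rw [zero_add]
      rfl
    simp only [zero_add, ContinuousLinearMap.zero_apply, sub_zero, Real.norm_eq_abs]
    have hstep : |(Wg α p e δ Φ Ψ (z, x.2) • z : Euc m) i - (Wg α p e δ Φ Ψ ((0:Euc m), x.2) • (0:Euc m) : Euc m) i|
        ≤ c * ‖z‖ := by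
      have h00 : ((Wg α p e δ Φ Ψ ((0:Euc m), x.2) • (0:Euc m) : Euc m) i) = 0 := by
        rw [smul_zero]
        rfl
      rw [h00, sub_zero]
      have h01 : ((Wg α p e δ Φ Ψ (z, x.2) • z : Euc m) i) = Wg α p e δ Φ Ψ (z, x.2) * z i := rfl
      rw [h01, abs_mul]
      calc |Wg α p e δ Φ Ψ (z, x.2)| * |z i| ≤ (D * ‖z‖ ^ (α * p)) * ‖z‖ := by
            apply mul_le_mul (hWbound z hzn) (abs_apply_le_norm z i) (abs_nonneg _)
            positivity
        _ ≤ c * ‖z‖ := mul_le_mul_of_nonneg_right hz1 (norm_nonneg z)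
    exact hstep
  unfold divZ
  apply Finset.sum_eq_zero
  intro i _
  have hfi := hcomp i
  rw [hx1, hfi.fderiv]
  rfl

theorem divS_W_zero (hΦ : IsMinkowskiNorm Φ) (hΨ : IsMinkowskiNorm Ψ)
    (hm : 1 ≤ m) (hk : 1 ≤ k) (hα : 0 < α) (hp : 1 < p)
    {x : Euc m × Euc k} (hx1 : x.1 = 0) :
    divS (fun y => ((α + 1) * Wg α p e δ Φ Ψ y) • y.2) x = 0 := by
  unfold divS
  apply Finset.sum_eq_zero
  intro i _
  have hfun : (fun σ => (((α + 1) * Wg α p e δ Φ Ψ (x.1, σ)) • σ : Euc k) i)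
      = fun _ => (0:ℝ) := by
    funext σ
    have h0 : Wg α p e δ Φ Ψ (x.1, σ) = 0 := Wg_zero hΦ hΨ hm hk hα hp hx1
    have h1 : ((((α + 1) * Wg α p e δ Φ Ψ (x.1, σ)) • σ : Euc k) i)
        = ((α + 1) * Wg α p e δ Φ Ψ (x.1, σ)) * σ i := rfl
    rw [h1, h0]
    ring
  rw [hfun]
  rw [fderiv_fun_const]
  rfl

end GrushinAux

open MinkAux GrushinAux in
/-- For `p ≠ Q`, the function `u = ρ^{−(Q−p)/(p−1)}` satisfies `𝓛_{α,p}(u) = 0` on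
`ℝ^N ∖ {0}`. -/
theorem Lop_of_power_of_rho (m k : ℕ) (hm : 1 ≤ m) (hk : 1 ≤ k)
    (α : ℝ) (hα : 0 < α) (p : ℝ) (hp : 1 < p)
    (Φ : Euc m → ℝ) (Ψ : Euc k → ℝ) (hΦ : IsMinkowskiNorm Φ) (hΨ : IsMinkowskiNorm Ψ)
    (Q : ℝ) (hQ : Q = (m : ℝ) + (α + 1) * (k : ℝ)) (hpQ : p ≠ Q) :
    ∀ x : Euc m × Euc k, x ≠ 0 →
      Lop α p Φ Ψ (fun y => rho α Φ Ψ y ^ (-((Q - p) / (p - 1)))) x = 0 := by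
  intro x hx
  set e : ℝ := -((Q - p) / (p - 1)) with he_def
  set β : ℝ := e / (2 * (α + 1)) with hβ_def
  set δ : ℝ := (2 * β - 1) * ((p - 2) / 2) + (β - 1) with hδ_def
  have he : e ≠ 0 := by
    rw [he_def]
    apply neg_ne_zero.2
    apply div_ne_zero
    · exact sub_ne_zero.2 (Ne.symm hpQ)
    · exact sub_ne_zero.2 (ne_of_gt hp)
  have hQsum : (m:ℝ) + (α + 1) * k + α * p + 2 * (α + 1) * δ = 0 := by
    have hkey := exponent_key (ne_of_gt hp) hα he_def hβ_def hδ_def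
    rw [hQ] at hkey
    exact hkey
  -- replace the flux by its closed form
  have hevZ : ∀ᶠ z in nhds x.1, (z, x.2) ≠ (0 : Euc m × Euc k) := by
    rcases eq_or_ne x.2 0 with h2 | h2
    · have hx1 : x.1 ≠ 0 := by
        intro h1
        exact hx (Prod.ext h1 h2)
      filter_upwards [IsOpen.mem_nhds isOpen_compl_singleton hx1] with z hz
      exact fun hcon => hz (congrArg Prod.fst hcon)
    · exact Filter.Eventually.of_forall fun z hcon => h2 (congrArg Prod.snd hcon)
  have hevS : ∀ᶠ σ in nhds x.2, (x.1, σ) ≠ (0 : Euc m × Euc k) := by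
    rcases eq_or_ne x.1 0 with h1 | h1
    · have hx2 : x.2 ≠ 0 := by
        intro h2
        exact hx (Prod.ext h1 h2)
      filter_upwards [IsOpen.mem_nhds isOpen_compl_singleton hx2] with σ hσ
      exact fun hcon => hσ (congrArg Prod.snd hcon)
    · exact Filter.Eventually.of_forall fun σ hcon => h1 (congrArg Prod.fst hcon)
  have hdZ : divZ (fun y =>
      (Φ (gradZ (fun y => rho α Φ Ψ y ^ e) y) ^ 2 + dualNorm Φ y.1 ^ (2 * α) / 4
          * Ψ (gradS (fun y => rho α Φ Ψ y ^ e) y) ^ 2) ^ ((p - 2) / 2) •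
        (Φ (gradZ (fun y => rho α Φ Ψ y ^ e) y) •
          gradient Φ (gradZ (fun y => rho α Φ Ψ y ^ e) y))) x
      = divZ (fun y => Wg α p e δ Φ Ψ y • y.1) x := by
    unfold divZ
    apply Finset.sum_congr rfl
    intro i _
    have heq : (fun z =>
        ((Φ (gradZ (fun y => rho α Φ Ψ y ^ e) (z, x.2)) ^ 2 + dualNorm Φ (z, x.2).1 ^ (2 * α) / 4
            * Ψ (gradS (fun y => rho α Φ Ψ y ^ e) (z, x.2)) ^ 2) ^ ((p - 2) / 2) •
          (Φ (gradZ (fun y => rho α Φ Ψ y ^ e) (z, x.2)) •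
            gradient Φ (gradZ (fun y => rho α Φ Ψ y ^ e) (z, x.2))) : Euc m) i)
        =ᶠ[nhds x.1] fun z => ((Wg α p e δ Φ Ψ (z, x.2) • z : Euc m) i) := by
      filter_upwards [hevZ] with z hz
      have hfl := fluxZ_eq (e := e) (β := β) (δ := δ) hΦ hΨ hm hk hα hp he hβ_def hδ_def hz
      exact congrArg (fun v : Euc m => v i) hfl
    rw [heq.fderiv_eq]
  have hdS : divS (fun y =>
      (Φ (gradZ (fun y => rho α Φ Ψ y ^ e) y) ^ 2 + dualNorm Φ y.1 ^ (2 * α) / 4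
          * Ψ (gradS (fun y => rho α Φ Ψ y ^ e) y) ^ 2) ^ ((p - 2) / 2) •
        ((dualNorm Φ y.1 ^ (2 * α) / 4 * Ψ (gradS (fun y => rho α Φ Ψ y ^ e) y)) •
          gradient Ψ (gradS (fun y => rho α Φ Ψ y ^ e) y))) x
      = divS (fun y => ((α + 1) * Wg α p e δ Φ Ψ y) • y.2) x := by
    unfold divS
    apply Finset.sum_congr rfl
    intro i _
    have heq : (fun σ =>
        ((Φ (gradZ (fun y => rho α Φ Ψ y ^ e) (x.1, σ)) ^ 2
            + dualNorm Φ (x.1, σ).1 ^ (2 * α) / 4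
            * Ψ (gradS (fun y => rho α Φ Ψ y ^ e) (x.1, σ)) ^ 2) ^ ((p - 2) / 2) •
          ((dualNorm Φ (x.1, σ).1 ^ (2 * α) / 4
              * Ψ (gradS (fun y => rho α Φ Ψ y ^ e) (x.1, σ))) •
            gradient Ψ (gradS (fun y => rho α Φ Ψ y ^ e) (x.1, σ))) : Euc k) i)
        =ᶠ[nhds x.2] fun σ => ((((α + 1) * Wg α p e δ Φ Ψ (x.1, σ)) • σ : Euc k) i) := by
      filter_upwards [hevS] with σ hσ
      have hfl := fluxS_eq (e := e) (β := β) (δ := δ) hΦ hΨ hm hk hα hp he hβ_def hδ_def hσ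
      exact congrArg (fun v : Euc k => v i) hfl
    rw [heq.fderiv_eq]
  show divZ _ x + divS _ x = 0
  rw [hdZ, hdS]
  rcases eq_or_ne x.1 0 with h1 | h1
  · have hx2 : x.2 ≠ 0 := by
      intro h2
      exact hx (Prod.ext h1 h2)
    rw [divZ_W_zero hΦ hΨ hm hk hα hp h1 hx2, divS_W_zero hΦ hΨ hm hk hα hp h1]
    norm_num
  · exact div_flux_zero hΦ hΨ hm hk hα hp hQsum hx h1
end
end
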